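/- arXiv:2006.10087 — 5 statements merged into one kernel-verified Lean document; each statement's English description precedes it below -/
import Mathlib

section
/- If labeled posets (P,ω) and (Q,τ) satisfy (P,ω) ≤_M (Q,τ), then the number of linear extensions of P is at most the number of linear extensions of Q. -/
open scoped BigOperators

section CommonDefs

variable {α : Type*}

/-- A `(P,ω)`-partition: an order-preserving map from the poset to the positive
integers (encoded in `ℕ`, all values `≥ 1`), strictly increasing along strict edges. -/
def IsPPart [PartialOrder α] (ω : α → ℕ) (f : α → ℕ) : Prop :=
  (∀ p, 1 ≤ f p) ∧ (∀ a b : α, a < b → f a ≤ f b) ∧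
    ∀ a b : α, a < b → ω b < ω a → f a < f b

/-- The `(P,ω)`-partition enumerator `K_{(P,ω)}` as a formal power series in the
variables `x_1, x_2, …` (the variable indexed by `i : ℕ` stands for `x_{i+1}`). -/
noncomputable def Kgen [PartialOrder α] (ω : α → ℕ) : MvPowerSeries ℕ ℚ :=
  fun d => (Set.ncard {f : α → ℕ |
    IsPPart ω f ∧ ∀ i : ℕ, Set.ncard {p : α | f p = i + 1} = d i} : ℚ)

/-- `K_{(P,ω)}` for a labeling by `Fin n`. -/
noncomputable def Kω [PartialOrder α] {n : ℕ} (ω : α ≃ Fin n) : MvPowerSeries ℕ ℚ :=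
  Kgen fun p => ((ω p : ℕ))

open Classical in
/-- The monomial quasisymmetric function `M_α`. -/
noncomputable def Mgen {n : ℕ} (c : Composition n) : MvPowerSeries ℕ ℚ :=
  fun d => if (∃ g : Fin c.length → ℕ, StrictMono g ∧
      d = ∑ j : Fin c.length, Finsupp.single (g j) (c.blocksFun j)) then 1 else 0

/-- The partial-sum set `S(α) ⊆ {1,…,n−1}` of a composition of `n`. -/
def compS {n : ℕ} (c : Composition n) : Finset ℕ :=
  (Finset.range (c.length - 1)).image fun i => c.sizeUpTo (i + 1)

open Classical in
/-- `F_{S,n} = Σ_{S ⊆ T ⊆ [n-1]} M_{T,n}`. -/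
noncomputable def FgenSet (n : ℕ) (S : Finset ℕ) : MvPowerSeries ℕ ℚ :=
  ∑ c : Composition n, if S ⊆ compS c then Mgen c else 0

/-- The fundamental quasisymmetric function `F_α`. -/
noncomputable def Fgen {n : ℕ} (c : Composition n) : MvPowerSeries ℕ ℚ :=
  FgenSet n (compS c)

/-- `e : Fin n ≃ α` is a listing of the elements of the poset compatible with the order. -/
def IsLinext [PartialOrder α] {n : ℕ} (e : Fin n ≃ α) : Prop :=
  ∀ i j : Fin n, e i < e j → i < j

/-- The set `L(P,ω)` of linear extensions, regarded as words (permutations of `Fin n`). -/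
def Linext [PartialOrder α] {n : ℕ} (ω : α ≃ Fin n) : Set (Fin n → Fin n) :=
  {w | ∃ e : Fin n ≃ α, IsLinext e ∧ w = fun i => ω (e i)}

open Classical in
/-- Descent set of a word, with 1-based positions, a subset of `{1,…,n−1}`:
`i ∈ Des w` iff the letter in position `i` is greater than the letter in position `i+1`. -/
noncomputable def Des {n : ℕ} (w : Fin n → Fin n) : Finset ℕ :=
  (Finset.Ioo 0 n).filter fun i =>
    ∃ hi : i < n, w ⟨i, hi⟩ < w ⟨i - 1, Nat.lt_of_le_of_lt (Nat.sub_le i 1) hi⟩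

/-- The F-support: the set of descent compositions of linear extensions. -/
def suppF [PartialOrder α] {n : ℕ} (ω : α ≃ Fin n) : Set (Composition n) :=
  {c | ∃ w ∈ Linext ω, compS c = Des w}

/-- The M-support: compositions `α = (α_1,…,α_k)` realized as fiber sizes of a
`(P,ω)`-partition with all values at most `k`. -/
def suppM [PartialOrder α] {n : ℕ} (ω : α ≃ Fin n) : Set (Composition n) :=
  {c | ∃ f : α → ℕ, IsPPart (fun p => ((ω p : ℕ))) f ∧ (∀ p, f p ≤ c.length) ∧
      ∀ i : Fin c.length, Set.ncard {p : α | f p = (i : ℕ) + 1} = c.blocksFun i}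

/-- `A` is a non-negative linear combination of fundamental quasisymmetric functions. -/
def NonnegFComb (A : MvPowerSeries ℕ ℚ) : Prop :=
  ∃ (s : Finset ((n : ℕ) × Composition n)) (coef : ((n : ℕ) × Composition n) → ℚ),
    (∀ x, 0 ≤ coef x) ∧ A = ∑ x ∈ s, coef x • Fgen x.2

/-- `A` is a non-negative linear combination of monomial quasisymmetric functions. -/
def NonnegMComb (A : MvPowerSeries ℕ ℚ) : Prop :=
  ∃ (s : Finset ((n : ℕ) × Composition n)) (coef : ((n : ℕ) × Composition n) → ℚ),
    (∀ x, 0 ≤ coef x) ∧ A = ∑ x ∈ s, coef x • Mgen x.2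

/-- `A ≤_F B`. -/
def LeF (A B : MvPowerSeries ℕ ℚ) : Prop := NonnegFComb (B - A)

/-- `A ≤_M B`. -/
def LeM (A B : MvPowerSeries ℕ ℚ) : Prop := NonnegMComb (B - A)

/-- The order-reversing permutation of `Fin n`. -/
def finRevEquiv {n : ℕ} : Fin n ≃ Fin n :=
  ⟨Fin.rev, Fin.rev, Fin.rev_rev, Fin.rev_rev⟩

def barLabel {n : ℕ} (ω : α ≃ Fin n) : α ≃ Fin n := ω.trans finRevEquiv

/-- The star involution: the dual poset with labels `ω*(a) = n+1−ω(a)`. -/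
def starLabel {n : ℕ} (ω : α ≃ Fin n) : αᵒᵈ ≃ Fin n :=
  OrderDual.ofDual.trans (barLabel ω)

/-- The reverse of a composition. -/
def compRev {n : ℕ} (c : Composition n) : Composition n :=
  ⟨c.blocks.reverse, fun h => c.blocks_pos (List.mem_reverse.mp h), by
    rw [List.sum_reverse]; exact c.blocks_sum⟩

/-- A saturated chain from `b` down to a minimal element, listed from top to bottom. -/
def IsDownChain [PartialOrder α] (b : α) (l : List α) : Prop :=
  l ≠ [] ∧ l.head? = some b ∧ List.Chain' (fun x y => y ⋖ x) l ∧
    ∀ x ∈ l.getLast?, IsMin x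

/-- Number of strict edges in a top-to-bottom saturated chain. -/
def strictCountDown (ω : α → ℕ) (l : List α) : ℕ :=
  (l.zip l.tail).countP fun p => decide (ω p.1 < ω p.2)

/-- The jump of an element: the maximum number of strict edges on a saturated chain
from `b` down to a minimal element. -/
noncomputable def jumpOf [PartialOrder α] (ω : α → ℕ) (b : α) : ℕ :=
  sSup {k | ∃ l : List α, IsDownChain b l ∧ strictCountDown ω l = k}

/-- The maximum jump of an element. -/
noncomputable def maxJump [PartialOrder α] [Fintype α] (ω : α → ℕ) : ℕ :=
  sSup {k | ∃ b : α, jumpOf ω b = k}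

/-- The jump sequence `(j_0, …, j_k)` as a list. -/
noncomputable def jumpBlocks [PartialOrder α] [Fintype α] (ω : α → ℕ) : List ℕ :=
  (List.range (maxJump ω + 1)).map fun i => Set.ncard {b : α | jumpOf ω b = i}

/-- A maximal chain (saturated, from a minimal to a maximal element), bottom to top. -/
def IsMaxChainList [PartialOrder α] (l : List α) : Prop :=
  l ≠ [] ∧ List.Chain' (· ⋖ ·) l ∧ (∀ x ∈ l.head?, IsMin x) ∧ ∀ x ∈ l.getLast?, IsMax x

/-- Number of strict edges in a bottom-to-top saturated chain. -/
def strictCountUp (ω : α → ℕ) (l : List α) : ℕ :=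
  (l.zip l.tail).countP fun p => decide (ω p.2 < ω p.1)

/-- Number of weak edges in a bottom-to-top saturated chain. -/
def weakCountUp (ω : α → ℕ) (l : List α) : ℕ :=
  (l.zip l.tail).countP fun p => decide (ω p.1 < ω p.2)

/-- A weak convex subposet: convex, and all cover relations inside it are weak. -/
def IsWeakConvex [PartialOrder α] (ω : α → ℕ) (S : Set α) : Prop :=
  (∀ ⦃x y z : α⦄, x < y → y < z → x ∈ S → z ∈ S → y ∈ S) ∧
    ∀ a ∈ S, ∀ b ∈ S, a ⋖ b → ω a < ω b

/-- The order relation of the assembled poset `𝒫[i → P_i]`. -/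
def assembledLe {I : Type*} (PO : PartialOrder I) {X : I → Type*}
    (Pc : ∀ i, PartialOrder (X i)) (x y : Σ i, X i) : Prop :=
  PO.lt x.1 y.1 ∨ ∃ h : x.1 = y.1, (Pc y.1).le (h ▸ x.2) y.2

/-- The assembled poset `𝒫[i → P_i]` as a partial order on the disjoint union. -/
def assembledOrder {I : Type*} (PO : PartialOrder I) {X : I → Type*}
    (Pc : ∀ i, PartialOrder (X i)) : PartialOrder (Σ i, X i) := by
  letI : PartialOrder I := PO
  letI instX : ∀ i, PartialOrder (X i) := Pc
  exact
  { le := assembledLe PO Pc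
    lt := fun x y => assembledLe PO Pc x y ∧ ¬ assembledLe PO Pc y x
    lt_iff_le_not_ge := fun _ _ => Iff.rfl
    le_refl := fun x => Or.inr ⟨rfl, le_refl x.2⟩
    le_trans := by
      rintro ⟨i, p⟩ ⟨j, q⟩ ⟨k, r⟩ h1 h2
      rcases h1 with h1 | ⟨e1, h1⟩ <;> rcases h2 with h2 | ⟨e2, h2⟩
      · exact Or.inl (lt_trans h1 h2)
      · dsimp only at e2 h2 ⊢; subst e2; exact Or.inl h1
      · dsimp only at e1 h1 ⊢; subst e1; exact Or.inl h2
      · dsimp only at e1 h1 e2 h2 ⊢; subst e1; subst e2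
        exact Or.inr ⟨rfl, le_trans h1 h2⟩
    le_antisymm := by
      rintro ⟨i, p⟩ ⟨j, q⟩ h1 h2
      rcases h1 with h1 | ⟨e1, h1⟩ <;> rcases h2 with h2 | ⟨e2, h2⟩
      · exact absurd (lt_trans h1 h2) (lt_irrefl _)
      · dsimp only at e2 h2 ⊢; subst e2; exact absurd h1 (lt_irrefl _)
      · dsimp only at e1 h1 ⊢; subst e1; exact absurd h2 (lt_irrefl _)
      · dsimp only at e1 h1 e2 h2 ⊢; subst e1
        obtain rfl : p = q := le_antisymm h1 h2
        rfl }

end CommonDefs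

section Aux
set_option linter.unusedSectionVars false

noncomputable def dComp (m : ℕ) : ℕ →₀ ℕ := ∑ i ∈ Finset.range m, Finsupp.single i 1

lemma dComp_apply (m i : ℕ) : dComp m i = if i < m then 1 else 0 := by
  classical
  rw [dComp, Finsupp.finset_sum_apply]
  simp [Finsupp.single_apply, Finset.sum_ite_eq', Finset.mem_range]

variable {α : Type*} [PartialOrder α] [Fintype α]

lemma finj_of {m : ℕ} {f : α → ℕ} (h1 : ∀ p : α, 1 ≤ f p)
    (hfib : ∀ i : ℕ, Set.ncard {p : α | f p = i + 1} = dComp m i) :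
    Function.Injective f := by
  intro a b hab
  have ha : f a = (f a - 1) + 1 := (Nat.sub_add_cancel (h1 a)).symm
  set i := f a - 1 with hi
  have hmem_a : a ∈ {p : α | f p = i + 1} := ha
  have hmem_b : b ∈ {p : α | f p = i + 1} := by
    simpa [Set.mem_setOf_eq, ← hab] using ha
  have hcard := hfib i
  rw [dComp_apply] at hcard
  by_cases him : i < m
  · rw [if_pos him] at hcard
    obtain ⟨x, hx⟩ := Set.ncard_eq_one.mp hcard
    rw [hx] at hmem_a hmem_b
    rw [hmem_a, hmem_b]
  · rw [if_neg him] at hcard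
    exact absurd (((Set.ncard_eq_zero (Set.toFinite _)).mp hcard) ▸ hmem_a) (by simp)

lemma flt_of {m : ℕ} {f : α → ℕ} (h1 : ∀ p : α, 1 ≤ f p)
    (hfib : ∀ i : ℕ, Set.ncard {p : α | f p = i + 1} = dComp m i) (p : α) :
    f p - 1 < m := by
  by_contra him
  have hcard := hfib (f p - 1)
  rw [dComp_apply, if_neg him] at hcard
  have hmem : p ∈ {q : α | f q = (f p - 1) + 1} := (Nat.sub_add_cancel (h1 p)).symm
  exact absurd (((Set.ncard_eq_zero (Set.toFinite _)).mp hcard) ▸ hmem) (by simp)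

lemma cardLinext_eq {m : ℕ} (ω : α ≃ Fin m) :
    Nat.card {e : Fin m ≃ α // IsLinext e} =
      Set.ncard {f : α → ℕ | IsPPart (fun p => ((ω p : ℕ))) f ∧
        ∀ i : ℕ, Set.ncard {p : α | f p = i + 1} = dComp m i} := by
  classical
  have hcardα : Fintype.card α = m := by
    rw [Fintype.card_congr ω, Fintype.card_fin]
  rw [← Nat.card_coe_set_eq]
  set S := {f : α → ℕ | IsPPart (fun p => ((ω p : ℕ))) f ∧
        ∀ i : ℕ, Set.ncard {p : α | f p = i + 1} = dComp m i} with hS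
  -- forward map
  have hmemS : ∀ e : Fin m ≃ α, IsLinext e → (fun p => ((e.symm p : ℕ) + 1)) ∈ S := by
    intro e he
    have hstrict : ∀ a b : α, a < b → ((e.symm a : ℕ)) < ((e.symm b : ℕ)) := by
      intro a b hab
      exact he (e.symm a) (e.symm b) (by simpa using hab)
    refine ⟨⟨fun p => Nat.le_add_left 1 _, fun a b hab => by
        have := hstrict a b hab
        show (e.symm a : ℕ) + 1 ≤ (e.symm b : ℕ) + 1
        omega,
      fun a b hab _ => by
        have := hstrict a b hab
        show (e.symm a : ℕ) + 1 < (e.symm b : ℕ) + 1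
        omega⟩, ?_⟩
    intro i
    rw [dComp_apply]
    by_cases him : i < m
    · rw [if_pos him]
      have : {p : α | (e.symm p : ℕ) + 1 = i + 1} = {e ⟨i, him⟩} := by
        ext p
        simp only [Set.mem_setOf_eq, Set.mem_singleton_iff, Nat.add_right_cancel_iff]
        constructor
        · intro hp
          have : e.symm p = ⟨i, him⟩ := Fin.ext hp
          rw [← this]; simp
        · rintro rfl; simp
      rw [this, Set.ncard_singleton]
    · rw [if_neg him]
      have : {p : α | (e.symm p : ℕ) + 1 = i + 1} = ∅ := by
        ext p
        simp only [Set.mem_setOf_eq, Set.mem_empty_iff_false, iff_false,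
          Nat.add_right_cancel_iff]
        intro hp
        exact him (hp ▸ (e.symm p).isLt)
      rw [this, Set.ncard_empty]
  set F : {e : Fin m ≃ α // IsLinext e} → ↥S :=
    fun e => ⟨fun p => ((e.1.symm p : ℕ) + 1), hmemS e.1 e.2⟩ with hF
  apply Nat.card_eq_of_bijective F
  constructor
  · rintro ⟨e1, he1⟩ ⟨e2, he2⟩ h12
    have h12' : ∀ p, ((e1.symm p : ℕ) + 1) = ((e2.symm p : ℕ) + 1) :=
      fun p => congrFun (congrArg Subtype.val h12) p
    have hsymm : e1.symm = e2.symm := by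
      ext p
      have := h12' p; omega
    exact Subtype.ext (Equiv.symm_bijective.injective hsymm)
  · rintro ⟨f, hf⟩
    obtain ⟨⟨h1, h2, h3⟩, hfib⟩ := hf
    have finj := finj_of h1 hfib
    set g : α → Fin m := fun p => ⟨f p - 1, flt_of h1 hfib p⟩ with hg
    have ginj : Function.Injective g := by
      intro a b hab
      apply finj
      have : f a - 1 = f b - 1 := congrArg Fin.val hab
      have := h1 a; have := h1 b; omega
    have gbij : Function.Bijective g :=
      (Fintype.bijective_iff_injective_and_card g).mpr ⟨ginj, by simp [hcardα]⟩
    set e : Fin m ≃ α := (Equiv.ofBijective g gbij).symm with he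
    have hesymm : ∀ a : α, e.symm a = g a := fun a => rfl
    have hlin : IsLinext e := by
      intro i j hij
      have hab : e i < e j := hij
      have hle : f (e i) ≤ f (e j) := h2 _ _ hab
      have hne : f (e i) ≠ f (e j) := fun hc => absurd (finj hc) (ne_of_lt hab)
      have hlt : f (e i) < f (e j) := lt_of_le_of_ne hle hne
      have : g (e i) < g (e j) := by
        rw [Fin.lt_def]
        have := h1 (e i); simp only [hg]; omega
      have hgi : g (e i) = i := e.symm_apply_apply i
      have hgj : g (e j) = j := e.symm_apply_apply j
      rw [hgi, hgj] at this; exact this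
    refine ⟨⟨e, hlin⟩, ?_⟩
    apply Subtype.ext
    funext p
    show ((e.symm p : ℕ) + 1) = f p
    rw [hesymm]
    show (f p - 1) + 1 = f p
    exact Nat.sub_add_cancel (h1 p)

end Aux

lemma Mgen_nonneg {n : ℕ} (c : Composition n) (d : ℕ →₀ ℕ) : 0 ≤ Mgen c d := by
  unfold Mgen
  split <;> norm_num

lemma leM_coeff {A B : MvPowerSeries ℕ ℚ} (h : LeM A B) (d : ℕ →₀ ℕ) : A d ≤ B d := by
  obtain ⟨s, coef, hc, hs⟩ := h
  have h1 : (B - A) d = ∑ x ∈ s, coef x * (Mgen x.2 d) := by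
    rw [hs,
      show (∑ x ∈ s, coef x • Mgen x.2) d
        = MvPowerSeries.coeff d (∑ x ∈ s, coef x • Mgen x.2) from rfl,
      map_sum]
    rfl
  have hnn : (0:ℚ) ≤ (B - A) d := by
    rw [h1]
    exact Finset.sum_nonneg fun x hx => mul_nonneg (hc x) (Mgen_nonneg x.2 d)
  have h2 : (B - A) d = B d - A d := rfl
  linarith [h2 ▸ hnn]

lemma eq_of_nonempty {β : Type*} [PartialOrder β] [Fintype β] {n m : ℕ} (τ : β ≃ Fin n)
    (hne : ∃ f : β → ℕ, IsPPart (fun p => ((τ p : ℕ))) f ∧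
        ∀ i : ℕ, Set.ncard {p : β | f p = i + 1} = dComp m i) : n = m := by
  obtain ⟨f, ⟨h1, h2, h3⟩, hfib⟩ := hne
  have finj := finj_of h1 hfib
  have ginj : Function.Injective (fun p => (⟨f p - 1, flt_of h1 hfib p⟩ : Fin m)) := by
    intro a b hab
    apply finj
    have : f a - 1 = f b - 1 := congrArg Fin.val hab
    have := h1 a; have := h1 b; omega
  have hle : Fintype.card β ≤ m := by
    calc Fintype.card β ≤ Fintype.card (Fin m) := Fintype.card_le_of_injective _ ginj
    _ = m := Fintype.card_fin m
  have hchoice : ∀ i : Fin m, ∃ p : β, f p = (i:ℕ) + 1 := by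
    intro i
    have hi := hfib (i : ℕ)
    rw [dComp_apply, if_pos i.isLt] at hi
    obtain ⟨x, hx⟩ := Set.ncard_eq_one.mp hi
    exact ⟨x, by
      have : x ∈ {p : β | f p = (i:ℕ) + 1} := hx ▸ rfl
      exact this⟩
  choose ch hch using hchoice
  have chinj : Function.Injective ch := by
    intro i j hij
    have : (i:ℕ) + 1 = (j:ℕ) + 1 := by rw [← hch i, ← hch j, hij]
    exact Fin.ext (by omega)
  have hge : m ≤ Fintype.card β := by
    calc m = Fintype.card (Fin m) := (Fintype.card_fin m).symm
    _ ≤ Fintype.card β := Fintype.card_le_of_injective ch chinj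
  have hcard : Fintype.card β = n := by rw [Fintype.card_congr τ, Fintype.card_fin]
  omega



/-- `(P,ω) ≤_M (Q,τ)` implies `|L(P)| ≤ |L(Q)|`. -/
theorem stmt_5 {α β : Type*} [PartialOrder α] [PartialOrder β] [Fintype α] [Fintype β]
    {m n : ℕ} (ω : α ≃ Fin m) (τ : β ≃ Fin n)
    (h : LeM (Kω ω) (Kω τ)) :
    Nat.card {e : Fin m ≃ α // IsLinext e} ≤ Nat.card {e : Fin n ≃ β // IsLinext e} := by
  classical
  have key : (Kω ω) (dComp m) ≤ (Kω τ) (dComp m) := leM_coeff h _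
  have hP : (Kω ω) (dComp m) =
      (Set.ncard {f : α → ℕ | IsPPart (fun p => ((ω p : ℕ))) f ∧
        ∀ i : ℕ, Set.ncard {p : α | f p = i + 1} = dComp m i} : ℚ) := rfl
  have hQ : (Kω τ) (dComp m) =
      (Set.ncard {f : β → ℕ | IsPPart (fun p => ((τ p : ℕ))) f ∧
        ∀ i : ℕ, Set.ncard {p : β | f p = i + 1} = dComp m i} : ℚ) := rfl
  rw [cardLinext_eq ω]
  have hτ : Set.ncard {f : β → ℕ | IsPPart (fun p => ((τ p : ℕ))) f ∧
        ∀ i : ℕ, Set.ncard {p : β | f p = i + 1} = dComp m i} ≤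
      Nat.card {e : Fin n ≃ β // IsLinext e} := by
    by_cases hne : Set.Nonempty {f : β → ℕ | IsPPart (fun p => ((τ p : ℕ))) f ∧
        ∀ i : ℕ, Set.ncard {p : β | f p = i + 1} = dComp m i}
    · obtain ⟨f, hf⟩ := hne
      have hnm : n = m := eq_of_nonempty τ ⟨f, hf.1, hf.2⟩
      subst hnm
      exact le_of_eq (cardLinext_eq τ).symm
    · rw [Set.not_nonempty_iff_eq_empty.mp hne, Set.ncard_empty]
      exact Nat.zero_le _
  refine le_trans ?_ hτ
  have hk := key
  rw [hP, hQ] at hk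
  exact_mod_cast hk
end

section
/- Let (P,ω) and (Q,τ) be labeled posets with supp_M(P,ω) ⊆ supp_M(Q,τ). If every cover relation of (P,ω) is a weak edge, then every cover relation of (Q,τ) is a weak edge. -/
open scoped BigOperators

/-- under `M`-support containment, if `(P,ω)` has only weak edges then so
does `(Q,τ)`. -/
theorem stmt_6 {α β : Type*} [PartialOrder α] [PartialOrder β] [Fintype α] [Fintype β]
    {n : ℕ} (ω : α ≃ Fin n) (τ : β ≃ Fin n)
    (h : suppM ω ⊆ suppM τ)
    (hP : ∀ a b : α, a ⋖ b → ω a < ω b) :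
    ∀ a b : β, a ⋖ b → τ a < τ b := by
  classical
  intro a b hab
  -- n > 0 since β is nonempty
  have hn : 0 < n := (τ a).pos
  -- the single-block composition (n)
  let c : Composition n := Composition.single n hn
  have hclen : c.length = 1 := Composition.single_length hn
  -- (n) ∈ suppM ω, via the constant function 1
  have hPmono : ∀ x y : α, x < y → (ω x : ℕ) < (ω y : ℕ) := by
    letI := Fintype.toLocallyFiniteOrder (α := α)
    intro x y hxy
    have hr := transGen_covBy_of_lt hxy
    clear hxy
    induction hr with
    | single h => exact hP _ _ h
    | tail _ h ih => exact ih.trans (hP _ _ h)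
  have hmem : c ∈ suppM ω := by
    refine ⟨fun _ => 1, ⟨fun _ => le_refl 1, fun _ _ _ => le_refl 1,
      fun x y hxy hωyx => absurd hωyx (hPmono x y hxy).asymm⟩,
      fun p => hclen ▸ le_refl 1, ?_⟩
    intro i
    have hi : (i : ℕ) = 0 := by omega
    have hb : c.blocksFun i = n := by
      simp [c, Composition.single, Composition.blocksFun, hi]
      rcases i with ⟨k, hk⟩
      dsimp only at hi
      subst hi
      rfl
    rw [hb, hi]
    have : {p : α | (1 : ℕ) = 0 + 1} = Set.univ := by
      ext p; simp
    rw [this, Set.ncard_univ, Nat.card_eq_fintype_card, Fintype.card_congr ω,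
      Fintype.card_fin]
  obtain ⟨f, ⟨hf1, -, hfs⟩, hfle, -⟩ := h hmem
  have hfeq : ∀ p : β, f p = 1 := fun p =>
    le_antisymm (hclen ▸ hfle p) (hf1 p)
  by_contra hlt
  have hne : τ a ≠ τ b := fun e => hab.ne (τ.injective e)
  have : (τ b : ℕ) < (τ a : ℕ) := by
    rcases lt_or_gt_of_ne hne with h' | h'
    · exact absurd h' hlt
    · exact h'
  have := hfs a b hab.lt this
  rw [hfeq a, hfeq b] at this
  omega
end

section
/- If labeled posets (P,ω) and (Q,τ) satisfy supp_M(P,ω) ⊆ supp_M(Q,τ) (in particular, if they satisfy supp_F(P,ω) ⊆ supp_F(Q,τ)), then jump(P,ω) ≤_dom jump(Q,τ). -/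
open scoped BigOperators

section JumpLemmas
set_option linter.unusedSectionVars false

open Classical Finset

variable {α : Type*} [PartialOrder α] [Fintype α]

lemma exists_covby_between {a b : α} (hab : a < b) : ∃ c, a ≤ c ∧ c ⋖ b := by
  classical
  obtain ⟨m, hm, hmax⟩ := Finset.exists_maximal
    (s := Finset.univ.filter fun x => a ≤ x ∧ x < b) ⟨a, by simp [hab]⟩
  simp only [Finset.mem_filter, Finset.mem_univ, true_and] at hm hmax
  refine ⟨m, hm.1, hm.2, fun x hmx hxb => ?_⟩
  exact (hmax ⟨hm.1.trans hmx.le, hxb⟩ hmx.le).not_gt hmx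

lemma downChain_cons {a b : α} {l : List α} (hab : a ⋖ b) (hl : IsDownChain a l) :
    IsDownChain b (b :: l) := by
  obtain ⟨hne, hhd, hch, hlast⟩ := hl
  cases l with
  | nil => simp at hne
  | cons x t =>
    have hx : x = a := by simpa using hhd
    subst hx
    refine ⟨by simp, by simp, List.isChain_cons_cons.mpr ⟨hab, hch⟩, ?_⟩
    intro y hy
    rw [List.getLast?_cons_cons] at hy
    exact hlast y hy

lemma exists_downChain (b : α) : ∃ l, IsDownChain b l := by
  induction b using WellFoundedLT.induction with
  | _ b IH =>
    by_cases hb : IsMin b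
    · exact ⟨[b], by simp, rfl, List.isChain_singleton _, by simpa using hb⟩
    · rw [not_isMin_iff] at hb
      obtain ⟨a, hab⟩ := hb
      obtain ⟨c, _, hcb⟩ := exists_covby_between hab
      obtain ⟨l, hl⟩ := IH c hcb.lt
      exact ⟨b :: l, downChain_cons hcb hl⟩

lemma downChain_nodup {b : α} {l : List α} (h : IsDownChain b l) : l.Nodup := by
  have h2 : List.Chain' (fun x y : α => y < x) l :=
    List.IsChain.imp (fun a b h => h.lt) h.2.2.1
  have h3 : List.Pairwise (fun x y : α => y < x) l := List.isChain_iff_pairwise.mp h2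
  exact h3.imp fun h => ne_of_gt h

lemma strictCountDown_le_card (ωf : α → ℕ) {b : α} {l : List α} (h : IsDownChain b l) :
    strictCountDown ωf l ≤ Fintype.card α := by
  calc strictCountDown ωf l ≤ (l.zip l.tail).length := List.countP_le_length
    _ ≤ l.length := by rw [List.length_zip]; omega
    _ ≤ Fintype.card α := (downChain_nodup h).length_le_card

lemma jumpSet_nonempty (ωf : α → ℕ) (b : α) :
    {k | ∃ l : List α, IsDownChain b l ∧ strictCountDown ωf l = k}.Nonempty := by
  obtain ⟨l, hl⟩ := exists_downChain b
  exact ⟨_, l, hl, rfl⟩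

lemma jumpSet_bdd (ωf : α → ℕ) (b : α) :
    BddAbove {k | ∃ l : List α, IsDownChain b l ∧ strictCountDown ωf l = k} := by
  refine ⟨Fintype.card α, fun k hk => ?_⟩
  obtain ⟨l, hl, rfl⟩ := hk
  exact strictCountDown_le_card ωf hl

lemma jump_mem_set (ωf : α → ℕ) (b : α) :
    ∃ l : List α, IsDownChain b l ∧ strictCountDown ωf l = jumpOf ωf b :=
  Nat.sSup_mem (jumpSet_nonempty ωf b) (jumpSet_bdd ωf b)

lemma le_jump (ωf : α → ℕ) {b : α} {l : List α} (h : IsDownChain b l) :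
    strictCountDown ωf l ≤ jumpOf ωf b :=
  le_csSup (jumpSet_bdd ωf b) ⟨l, h, rfl⟩

lemma jump_le_card (ωf : α → ℕ) (b : α) : jumpOf ωf b ≤ Fintype.card α :=
  csSup_le (jumpSet_nonempty ωf b) (by rintro k ⟨l, hl, rfl⟩; exact strictCountDown_le_card ωf hl)

omit [PartialOrder α] [Fintype α] in
lemma strictCountDown_cons (ωf : α → ℕ) {a : α} (b : α) (t : List α) :
    strictCountDown ωf (b :: a :: t) =
      (if ωf b < ωf a then 1 else 0) + strictCountDown ωf (a :: t) := by
  simp only [strictCountDown, List.zip_cons_cons, List.tail_cons, List.countP_cons]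
  by_cases h : ωf b < ωf a <;> simp [h, Nat.add_comm]

lemma head_eq_of_downChain {b : α} {x : α} {t : List α} (h : IsDownChain b (x :: t)) :
    x = b := by simpa using h.2.1

lemma jump_covby (ωf : α → ℕ) {a b : α} (hab : a ⋖ b) :
    jumpOf ωf a + (if ωf b < ωf a then 1 else 0) ≤ jumpOf ωf b := by
  obtain ⟨l, hl, hcount⟩ := jump_mem_set ωf a
  obtain ⟨t, rfl⟩ : ∃ t, l = a :: t := by
    cases l with
    | nil => simp [IsDownChain] at hl
    | cons x t => exact ⟨t, by rw [head_eq_of_downChain hl]⟩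
  have := le_jump ωf (downChain_cons hab hl)
  rw [strictCountDown_cons ωf b t] at this
  omega

lemma jump_lt_or_eq (ωf : α → ℕ) (hinj : Function.Injective ωf) {a b : α} (hab : a < b) :
    jumpOf ωf a < jumpOf ωf b ∨ (jumpOf ωf a = jumpOf ωf b ∧ ωf a < ωf b) := by
  induction b using WellFoundedLT.induction with
  | _ b IH =>
    obtain ⟨c, hac, hcb⟩ := exists_covby_between hab
    have hcov := jump_covby ωf hcb
    have hedge : jumpOf ωf c < jumpOf ωf b ∨ (jumpOf ωf c = jumpOf ωf b ∧ ωf c < ωf b) := by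
      by_cases hs : ωf b < ωf c
      · simp only [hs, if_pos] at hcov; omega
      · have hne : ωf c ≠ ωf b := fun h => hcb.ne (hinj h)
        have : ωf c < ωf b := by omega
        simp only [hs, if_neg, not_false_iff] at hcov
        rcases Nat.lt_or_ge (jumpOf ωf c) (jumpOf ωf b) with h | h
        · exact Or.inl h
        · exact Or.inr ⟨by omega, this⟩
    rcases eq_or_lt_of_le hac with rfl | hac'
    · exact hedge
    · rcases IH c hcb.lt hac' with h | ⟨h1, h2⟩
      · rcases hedge with h' | ⟨h', _⟩
        · exact Or.inl (h.trans h')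
        · exact Or.inl (h' ▸ h)
      · rcases hedge with h' | ⟨h', h2'⟩
        · exact Or.inl (h1 ▸ h')
        · exact Or.inr ⟨h1.trans h', h2.trans h2'⟩

lemma jump_mono (ωf : α → ℕ) (hinj : Function.Injective ωf) {a b : α} (hab : a < b) :
    jumpOf ωf a ≤ jumpOf ωf b := by
  rcases jump_lt_or_eq ωf hinj hab with h | ⟨h, _⟩ <;> omega

lemma jump_strict (ωf : α → ℕ) (hinj : Function.Injective ωf) {a b : α} (hab : a < b)
    (hs : ωf b < ωf a) : jumpOf ωf a < jumpOf ωf b := by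
  rcases jump_lt_or_eq ωf hinj hab with h | ⟨_, h⟩
  · exact h
  · omega

end JumpLemmas
section PPartLemmas
set_option linter.unusedSectionVars false

open Classical Finset

variable {α : Type*} [PartialOrder α] [Fintype α]

lemma ppart_gt_count {ωf : α → ℕ} {f : α → ℕ} (hf : IsPPart ωf f) :
    ∀ (l : List α) (b : α), IsDownChain b l → strictCountDown ωf l < f b := by
  intro l
  induction l with
  | nil => intro b hb; simp [IsDownChain] at hb
  | cons x t IH =>
    intro b hb
    have hx : x = b := head_eq_of_downChain hb
    subst hx
    cases t with
    | nil =>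
      have : strictCountDown ωf [x] = 0 := by simp [strictCountDown]
      rw [this]
      exact hf.1 x
    | cons a t' =>
      have hchain := hb.2.2.1
      have hcov : a ⋖ x := (List.isChain_cons_cons.mp hchain).1
      have htail : IsDownChain a (a :: t') := by
        refine ⟨by simp, rfl, (List.isChain_cons_cons.mp hchain).2, ?_⟩
        intro y hy
        have := hb.2.2.2 y
        rw [List.getLast?_cons_cons] at this
        exact this hy
      have hIH := IH a htail
      rw [strictCountDown_cons ωf x t']
      by_cases hs : ωf x < ωf a
      · have : f a < f x := hf.2.2 a x hcov.lt hs
        simp only [hs, if_pos]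
        omega
      · have : f a ≤ f x := hf.2.1 a x hcov.lt
        simp only [hs, if_neg, not_false_iff]
        omega

lemma jump_lt_ppart {ωf : α → ℕ} {f : α → ℕ} (hf : IsPPart ωf f) (b : α) :
    jumpOf ωf b < f b := by
  obtain ⟨l, hl, hc⟩ := jump_mem_set ωf b
  rw [← hc]
  exact ppart_gt_count hf l b hl

/-- Interval property: every value up to the jump of `b` is attained. -/
lemma jump_interval (ωf : α → ℕ) :
    ∀ (l : List α) (b : α), IsDownChain b l → strictCountDown ωf l = jumpOf ωf b →
      ∀ i ≤ jumpOf ωf b, ∃ b', jumpOf ωf b' = i := by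
  intro l
  induction l with
  | nil => intro b hb; simp [IsDownChain] at hb
  | cons x t IH =>
    intro b hb hcount i hi
    have hx : x = b := head_eq_of_downChain hb
    subst hx
    cases t with
    | nil =>
      have h0 : strictCountDown ωf [x] = 0 := by simp [strictCountDown]
      rw [h0] at hcount
      have : i = 0 := by omega
      exact ⟨x, by omega⟩
    | cons a t' =>
      have hchain := hb.2.2.1
      have hcov : a ⋖ x := (List.isChain_cons_cons.mp hchain).1
      have htail : IsDownChain a (a :: t') := by
        refine ⟨by simp, rfl, (List.isChain_cons_cons.mp hchain).2, ?_⟩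
        intro y hy
        have := hb.2.2.2 y
        rw [List.getLast?_cons_cons] at this
        exact this hy
      have hcons := strictCountDown_cons ωf x t' (a := a)
      set e : ℕ := if ωf x < ωf a then 1 else 0 with he
      have hle : strictCountDown ωf (a :: t') ≤ jumpOf ωf a := le_jump ωf htail
      have hcov' := jump_covby ωf hcov
      rw [← he] at hcov'
      -- jumpOf a = strictCountDown (a :: t'), and it's optimal
      have heq : jumpOf ωf a = strictCountDown ωf (a :: t') := by
        rw [hcons] at hcount; omega
      have hIH := IH a htail heq.symm
      rcases Nat.lt_or_ge i (jumpOf ωf x) with hlt | hge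
      · -- i ≤ jumpOf a  since jumpOf x = e + jumpOf a  with e ≤ 1
        have : i ≤ jumpOf ωf a := by
          have : jumpOf ωf x ≤ e + jumpOf ωf a := by rw [← hcount, hcons]; omega
          have he1 : e ≤ 1 := by rw [he]; split <;> omega
          omega
        exact hIH i this
      · exact ⟨x, by omega⟩

variable (ωf : α → ℕ)

lemma jump_le_maxJump (b : α) : jumpOf ωf b ≤ maxJump ωf :=
  le_csSup ⟨Fintype.card α, by rintro k ⟨b, rfl⟩; exact jump_le_card ωf b⟩ ⟨b, rfl⟩

lemma maxJump_attained [Nonempty α] : ∃ b : α, jumpOf ωf b = maxJump ωf := by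
  have hne : {k | ∃ b : α, jumpOf ωf b = k}.Nonempty := ⟨_, Classical.arbitrary α, rfl⟩
  exact Nat.sSup_mem hne ⟨Fintype.card α, by rintro k ⟨b, rfl⟩; exact jump_le_card ωf b⟩

lemma exists_jump_eq [Nonempty α] {i : ℕ} (hi : i ≤ maxJump ωf) :
    ∃ b : α, jumpOf ωf b = i := by
  obtain ⟨b, hb⟩ := maxJump_attained ωf
  obtain ⟨l, hl, hc⟩ := jump_mem_set ωf b
  exact jump_interval ωf l b hl hc i (by omega)

end PPartLemmas
section CountLemmas
set_option linter.unusedSectionVars false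

open Finset

variable {α : Type*} [PartialOrder α] [Fintype α] (ωf : α → ℕ)

lemma ncard_eq_filter_card (p : α → Prop) [DecidablePred p] :
    {x : α | p x}.ncard = (Finset.univ.filter p).card := by
  classical
  rw [Set.ncard_eq_toFinset_card', Set.toFinset_setOf]

lemma filter_card_lt_eq_sum (g : α → ℕ) (M : ℕ) :
    (Finset.univ.filter fun p : α => g p < M).card =
      ∑ i ∈ Finset.range M, (Finset.univ.filter fun p : α => g p = i).card := by
  rw [Finset.card_eq_sum_card_fiberwise (f := fun p => g p) (t := Finset.range M)
    (fun x hx => by simpa using (Finset.mem_filter.mp hx).2)]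
  refine Finset.sum_congr rfl fun i hi => ?_
  congr 1
  ext x
  simp only [Finset.mem_filter, Finset.mem_univ, true_and]
  constructor
  · rintro ⟨_, h⟩; exact h
  · rintro h; exact ⟨by simp only [h]; exact Finset.mem_range.mp hi, h⟩

lemma jumpBlocks_take_sum (m : ℕ) :
    ((jumpBlocks ωf).take m).sum =
      (Finset.univ.filter fun p : α => jumpOf ωf p < m).card := by
  set K := maxJump ωf with hK
  have h1 : (jumpBlocks ωf).take m =
      (List.range (min m (K + 1))).map fun i => Set.ncard {b : α | jumpOf ωf b = i} := by
    rw [jumpBlocks, ← List.map_take, List.take_range]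
  have h2 : ((List.range (min m (K + 1))).map
      fun i => Set.ncard {b : α | jumpOf ωf b = i}).sum =
      ∑ i ∈ Finset.range (min m (K + 1)), Set.ncard {b : α | jumpOf ωf b = i} := rfl
  rw [h1, h2]
  have h3 : ∀ i ∈ Finset.range (min m (K+1)), Set.ncard {b : α | jumpOf ωf b = i} =
      (Finset.univ.filter fun p : α => jumpOf ωf p = i).card :=
    fun i _ => ncard_eq_filter_card _
  rw [Finset.sum_congr rfl h3, ← filter_card_lt_eq_sum]
  congr 1
  ext x
  simp only [Finset.mem_filter, Finset.mem_univ, true_and]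
  have := jump_le_maxJump ωf x
  omega

lemma sum_take_eq_sum_getD (L : List ℕ) (m : ℕ) :
    (L.take m).sum = ∑ i ∈ Finset.range m, L.getD i 0 := by
  induction m generalizing L with
  | zero => simp
  | succ m IH =>
    cases L with
    | nil => simp
    | cons a t =>
      rw [List.take_succ_cons, List.sum_cons, Finset.sum_range_succ', IH t]
      simp [Nat.add_comm]

end CountLemmas
section CompLemmas

open Finset

/-- Successive differences. -/
def diffsAux : ℕ → List ℕ → List ℕ
  | _, [] => []
  | prev, x :: t => (x - prev) :: diffsAux x t

lemma diffsAux_length (prev : ℕ) (l : List ℕ) : (diffsAux prev l).length = l.length := by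
  induction l generalizing prev with
  | nil => rfl
  | cons x t IH => simp [diffsAux, IH]

lemma diffsAux_pos {prev : ℕ} {l : List ℕ} (h : List.Chain (· < ·) prev l) :
    ∀ b ∈ diffsAux prev l, 0 < b := by
  induction l generalizing prev with
  | nil => intro b hb; simp [diffsAux] at hb
  | cons x t IH =>
    simp only [List.Chain, List.isChain_cons_cons] at h
    intro b hb
    rcases List.mem_cons.mp hb with rfl | hb
    · omega
    · exact IH h.2 b hb

lemma diffsAux_sum {prev z : ℕ} {l : List ℕ} (hz : l.getLast? = some z)
    (h : List.Chain (· < ·) prev l) :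
    (diffsAux prev l).sum + prev = z := by
  induction l generalizing prev with
  | nil => simp at hz
  | cons x t IH =>
    simp only [List.Chain, List.isChain_cons_cons] at h
    cases t with
    | nil =>
      simp only [List.getLast?_singleton, Option.some.injEq] at hz
      subst hz
      simp [diffsAux]; omega
    | cons y t' =>
      rw [List.getLast?_cons_cons] at hz
      have := IH (prev := x) hz h.2
      simp only [diffsAux, List.sum_cons] at this ⊢
      omega

lemma diffsAux_partial {prev : ℕ} {l : List ℕ} (h : List.Chain (· < ·) prev l)
    {k : ℕ} (hk : k < l.length) :
    ((diffsAux prev l).take (k + 1)).sum + prev = l.get ⟨k, hk⟩ := by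
  induction k generalizing prev l with
  | zero =>
    cases l with
    | nil => simp at hk
    | cons x t =>
      simp only [List.Chain, List.isChain_cons_cons] at h
      simp [diffsAux]
      omega
  | succ k IH =>
    cases l with
    | nil => simp at hk
    | cons x t =>
      simp only [List.Chain, List.isChain_cons_cons] at h
      have hk' : k < t.length := by simpa using hk
      have := IH (prev := x) (l := t) h.2 hk'
      simp only [diffsAux, List.take_succ_cons, List.sum_cons, List.get_cons_succ]
      omega

variable {n : ℕ}

/-- The composition of `n` whose partial-sum set is a given `D ⊆ (0,n)`. -/
noncomputable def compOfFinset (n : ℕ) (hn : 0 < n) (D : Finset ℕ)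
    (hD : D ⊆ Finset.Ioo 0 n) : Composition n := by
  classical
  refine ⟨diffsAux 0 (D.sort (· ≤ ·) ++ [n]), ?_, ?_⟩
  · have hchain : List.Chain (· < ·) 0 (D.sort (· ≤ ·) ++ [n]) := by
      simp only [List.Chain]; rw [List.isChain_iff_pairwise, ← List.cons_append]
      apply List.pairwise_append.mpr
      refine ⟨?_, by simp, ?_⟩
      · rw [List.pairwise_cons]
        refine ⟨fun x hx => ?_, D.sortedLT_sort.pairwise⟩
        have := hD (by simpa using hx)
        simp at this; omega
      · intro x hx y hy
        simp only [List.mem_singleton] at hy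
        subst hy
        rcases List.mem_cons.mp hx with rfl | hx
        · exact hn
        · have := hD (by simpa using hx)
          simp at this; omega
    exact fun b hb => diffsAux_pos hchain b hb
  · have hchain : List.Chain (· < ·) 0 (D.sort (· ≤ ·) ++ [n]) := by
      simp only [List.Chain]; rw [List.isChain_iff_pairwise, ← List.cons_append]
      apply List.pairwise_append.mpr
      refine ⟨?_, by simp, ?_⟩
      · rw [List.pairwise_cons]
        refine ⟨fun x hx => ?_, D.sortedLT_sort.pairwise⟩
        have := hD (by simpa using hx)
        simp at this; omega
      · intro x hx y hy
        simp only [List.mem_singleton] at hy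
        subst hy
        rcases List.mem_cons.mp hx with rfl | hx
        · exact hn
        · have := hD (by simpa using hx)
          simp at this; omega
    have := diffsAux_sum List.getLast?_concat hchain
    omega

end CompLemmas
section CompLemmas2

open Finset

variable {n : ℕ}

lemma filter_lt_range (N d : ℕ) :
    (Finset.range N).filter (· < d) = Finset.range (min d N) := by
  ext x; simp; omega

lemma index_lt_iff (c : Composition n) (j : Fin n) (m : ℕ) :
    (c.index j : ℕ) < m ↔ (j : ℕ) < c.sizeUpTo m := by
  constructor
  · intro h
    calc (j : ℕ) < c.sizeUpTo ((c.index j : ℕ) + 1) := c.lt_sizeUpTo_index_succ j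
      _ ≤ c.sizeUpTo m := c.monotone_sizeUpTo (by omega)
  · intro h
    by_contra hc
    push_neg at hc
    have : c.sizeUpTo m ≤ c.sizeUpTo (c.index j) := c.monotone_sizeUpTo hc
    have := c.sizeUpTo_index_le j
    omega

lemma sizeUpTo_succ_le_iff (c : Composition n) (j : Fin n) (i : ℕ) :
    c.sizeUpTo (i + 1) ≤ (j : ℕ) ↔ i < (c.index j : ℕ) := by
  have := index_lt_iff c j (i + 1)
  omega

lemma count_compS (c : Composition n) (j : Fin n) :
    ((compS c).filter (· ≤ (j : ℕ))).card = (c.index j : ℕ) := by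
  classical
  have hidx : (c.index j : ℕ) ≤ c.length - 1 := by
    have := (c.index j).2; omega
  rw [compS, Finset.filter_image]
  have hfil : (Finset.range (c.length - 1)).filter (fun i => c.sizeUpTo (i + 1) ≤ (j : ℕ))
      = Finset.range (c.index j : ℕ) := by
    ext i
    simp only [Finset.mem_filter, Finset.mem_range, sizeUpTo_succ_le_iff c j i]
    omega
  rw [hfil]
  rw [Finset.card_image_of_injOn, Finset.card_range]
  have key : ∀ a b : ℕ, a < b → b < (c.index j : ℕ) →
      c.sizeUpTo (a + 1) < c.sizeUpTo (b + 1) := by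
    intro a b hab hb
    have hlen := (c.index j).2
    have h1 : c.sizeUpTo (a + 1) < c.sizeUpTo (a + 2) :=
      c.sizeUpTo_strict_mono (by omega)
    have h2 : c.sizeUpTo (a + 2) ≤ c.sizeUpTo (b + 1) := c.monotone_sizeUpTo (by omega)
    omega
  intro a ha b hb hab
  simp only [Finset.coe_range, Set.mem_Iio] at ha hb
  have hab' : c.sizeUpTo (a + 1) = c.sizeUpTo (b + 1) := hab
  rcases lt_trichotomy a b with h | h | h
  · exact absurd hab' (Nat.ne_of_lt (key a b h hb))
  · exact h
  · exact absurd hab'.symm (Nat.ne_of_lt (key b a h ha))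

lemma card_count_lt (c : Composition n) (m : ℕ) :
    ((Finset.range n).filter fun j =>
      ((compS c).filter (· ≤ j)).card < m).card = c.sizeUpTo m := by
  classical
  have h : (Finset.range n).filter (fun j => ((compS c).filter (· ≤ j)).card < m)
      = (Finset.range n).filter (· < c.sizeUpTo m) := by
    refine Finset.filter_congr fun j hj => ?_
    rw [Finset.mem_range] at hj
    rw [count_compS c ⟨j, hj⟩, index_lt_iff c ⟨j, hj⟩ m]
  rw [h, filter_lt_range, Finset.card_range]
  have := c.sizeUpTo_le m
  omega

end CompLemmas2
section CompLemmas3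

open Finset

variable {n : ℕ}

lemma chain_sort (hn : 0 < n) (D : Finset ℕ) (hD : D ⊆ Finset.Ioo 0 n) :
    List.Chain (· < ·) 0 (D.sort (· ≤ ·) ++ [n]) := by
  simp only [List.Chain]; rw [List.isChain_iff_pairwise, ← List.cons_append]
  apply List.pairwise_append.mpr
  refine ⟨?_, by simp, ?_⟩
  · rw [List.pairwise_cons]
    refine ⟨fun x hx => ?_, D.sortedLT_sort.pairwise⟩
    have := hD (by simpa using hx)
    simp at this; omega
  · intro x hx y hy
    simp only [List.mem_singleton] at hy
    subst hy
    rcases List.mem_cons.mp hx with rfl | hx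
    · exact hn
    · have := hD (by simpa using hx)
      simp at this; omega

lemma compOfFinset_blocks (hn : 0 < n) (D : Finset ℕ) (hD : D ⊆ Finset.Ioo 0 n) :
    (compOfFinset n hn D hD).blocks = diffsAux 0 (D.sort (· ≤ ·) ++ [n]) := rfl

lemma compOfFinset_length (hn : 0 < n) (D : Finset ℕ) (hD : D ⊆ Finset.Ioo 0 n) :
    (compOfFinset n hn D hD).length = D.card + 1 := by
  rw [Composition.length, compOfFinset_blocks, diffsAux_length]
  simp

lemma compOfFinset_sizeUpTo (hn : 0 < n) (D : Finset ℕ) (hD : D ⊆ Finset.Ioo 0 n)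
    {k : ℕ} (hk : k < D.card + 1) :
    (compOfFinset n hn D hD).sizeUpTo (k + 1) =
      (D.sort (· ≤ ·) ++ [n]).get ⟨k, by simp; omega⟩ := by
  have h := diffsAux_partial (chain_sort hn D hD) (k := k) (by simp; omega)
  rw [Composition.sizeUpTo, compOfFinset_blocks]
  omega

lemma compS_compOfFinset (hn : 0 < n) (D : Finset ℕ) (hD : D ⊆ Finset.Ioo 0 n) :
    compS (compOfFinset n hn D hD) = D := by
  classical
  ext x
  rw [compS, Finset.mem_image]
  rw [show (compOfFinset n hn D hD).length - 1 = D.card by rw [compOfFinset_length]; omega]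
  constructor
  · rintro ⟨i, hi, rfl⟩
    rw [Finset.mem_range] at hi
    rw [compOfFinset_sizeUpTo hn D hD (by omega)]
    have hlt : i < (D.sort (· ≤ ·)).length := by simpa using hi
    rw [List.get_eq_getElem, List.getElem_append_left hlt]
    exact (Finset.mem_sort _).mp (List.getElem_mem _)
  · intro hx
    have hx' : x ∈ D.sort (· ≤ ·) := (Finset.mem_sort _).mpr hx
    obtain ⟨⟨i, hi⟩, hget⟩ := List.mem_iff_get.mp hx'
    refine ⟨i, by simpa using hi, ?_⟩
    rw [compOfFinset_sizeUpTo hn D hD (by simp at hi; omega)]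
    rw [List.get_eq_getElem, List.getElem_append_left hi]
    exact hget

end CompLemmas3
section SortedEquiv

open Finset

lemma exists_sorted_equiv {α : Type*} [Fintype α] {n : ℕ} (key : α → ℕ)
    (hinj : Function.Injective key) (hcard : Fintype.card α = n) :
    ∃ e : Fin n ≃ α, ∀ i j : Fin n, i < j → key (e i) < key (e j) := by
  classical
  set s : Finset ℕ := Finset.univ.image key with hs
  have hscard : s.card = n := by
    rw [hs, Finset.card_image_of_injective _ hinj, Finset.card_univ, hcard]
  let f0 : Fin n ≃o {x // x ∈ s} := s.orderIsoOfFin hscard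
  have hg : Function.Bijective (fun a : α => (⟨key a, by
      rw [hs]; exact Finset.mem_image_of_mem key (Finset.mem_univ a)⟩ : {x // x ∈ s})) := by
    constructor
    · intro a b hab
      exact hinj (congrArg Subtype.val hab)
    · rintro ⟨x, hx⟩
      rw [hs, Finset.mem_image] at hx
      obtain ⟨a, _, rfl⟩ := hx
      exact ⟨a, rfl⟩
  let g : α ≃ {x // x ∈ s} := Equiv.ofBijective _ hg
  refine ⟨f0.toEquiv.trans g.symm, fun i j hij => ?_⟩
  have hkey : ∀ y : {x // x ∈ s}, key (g.symm y) = (y : ℕ) := by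
    intro y
    have : g (g.symm y) = y := g.apply_symm_apply y
    exact congrArg Subtype.val this
  show key (g.symm (f0 i)) < key (g.symm (f0 j))
  rw [hkey, hkey]
  exact f0.strictMono hij

end SortedEquiv
section MSide
set_option linter.unusedSectionVars false

open Finset

variable {α : Type*} [PartialOrder α] [Fintype α] {n : ℕ}

lemma omf_inj (ω : α ≃ Fin n) : Function.Injective (fun p : α => ((ω p : ℕ))) := by
  intro a b hab
  exact ω.injective (Fin.val_injective hab)

lemma card_eq_n (ω : α ≃ Fin n) : Fintype.card α = n := by
  rw [Fintype.card_congr ω, Fintype.card_fin]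

lemma jumpBlocks_length (ωf : α → ℕ) : (jumpBlocks ωf).length = maxJump ωf + 1 := by
  rw [jumpBlocks, List.length_map, List.length_range]

lemma jumpBlocks_get (ωf : α → ℕ) (i : Fin (jumpBlocks ωf).length) :
    (jumpBlocks ωf).get i = Set.ncard {b : α | jumpOf ωf b = (i : ℕ)} := by
  rcases i with ⟨i, hi⟩
  simp [jumpBlocks]

lemma jumpBlocks_sum (ω : α ≃ Fin n) : (jumpBlocks fun p : α => ((ω p : ℕ))).sum = n := by
  classical
  have h1 : (jumpBlocks fun p : α => ((ω p : ℕ))).sum =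
      ((jumpBlocks fun p : α => ((ω p : ℕ))).take (maxJump (fun p : α => ((ω p : ℕ))) + 1)).sum := by
    rw [← jumpBlocks_length (fun p : α => ((ω p : ℕ))), List.take_length]
  rw [h1, jumpBlocks_take_sum]
  have h2 : (Finset.univ.filter fun p : α =>
      jumpOf (fun p : α => ((ω p : ℕ))) p < maxJump (fun p : α => ((ω p : ℕ))) + 1) =
      Finset.univ := by
    ext x; simp only [Finset.mem_filter, Finset.mem_univ, true_and, iff_true]
    have := jump_le_maxJump (fun p : α => ((ω p : ℕ))) x; omega
  rw [h2, Finset.card_univ, card_eq_n ω]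

/-- The jump composition, realized in the M-support. -/
lemma exists_suppM_jump [Nonempty α] (ω : α ≃ Fin n) :
    ∃ c : Composition n, c ∈ suppM ω ∧
      ∀ m : ℕ, ((jumpBlocks fun p => ((ω p : ℕ))).take m).sum = c.sizeUpTo m := by
  classical
  have hinj : Function.Injective (fun p : α => ((ω p : ℕ))) := omf_inj ω
  have hblocks_pos : ∀ b ∈ (jumpBlocks fun p : α => ((ω p : ℕ))), 0 < b := by
    intro b hb
    rw [jumpBlocks] at hb
    obtain ⟨i, hi, rfl⟩ := List.mem_map.mp hb
    rw [List.mem_range] at hi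
    obtain ⟨b', hb'⟩ := exists_jump_eq (fun p : α => ((ω p : ℕ))) (i := i) (by omega)
    have hfin : {b : α | jumpOf (fun p : α => ((ω p : ℕ))) b = i}.Finite := Set.toFinite _
    rw [Set.ncard_pos hfin]
    exact ⟨b', hb'⟩
  refine ⟨⟨jumpBlocks fun p : α => ((ω p : ℕ)), fun {i} hi => hblocks_pos i hi,
    jumpBlocks_sum ω⟩, ⟨fun p => jumpOf (fun p : α => ((ω p : ℕ))) p + 1, ⟨fun p => by
        show 1 ≤ jumpOf _ p + 1
        omega,
      fun a b hab => by
        have := jump_mono (fun p : α => ((ω p : ℕ))) hinj hab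
        show jumpOf _ a + 1 ≤ jumpOf _ b + 1
        omega,
      fun a b hab hs => by
        have := jump_strict (fun p : α => ((ω p : ℕ))) hinj hab hs
        show jumpOf _ a + 1 < jumpOf _ b + 1
        omega⟩, ?_, ?_⟩, ?_⟩
  · intro p
    show jumpOf _ p + 1 ≤ (jumpBlocks fun p : α => ((ω p : ℕ))).length
    rw [jumpBlocks_length]
    have := jump_le_maxJump (fun p : α => ((ω p : ℕ))) p
    omega
  · intro i
    have hset : {p : α | jumpOf (fun p : α => ((ω p : ℕ))) p + 1 = (i : ℕ) + 1} =
        {p : α | jumpOf (fun p : α => ((ω p : ℕ))) p = (i : ℕ)} := by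
      ext p; simp
    show Set.ncard {p : α | jumpOf (fun p : α => ((ω p : ℕ))) p + 1 = (i : ℕ) + 1} = _
    rw [hset]
    exact (jumpBlocks_get (fun p : α => ((ω p : ℕ))) ⟨(i : ℕ), i.2⟩).symm
  · intro m
    rfl

/-- Any composition in the M-support has partial sums dominated by the jump partial sums. -/
lemma suppM_le_jump (ω : α ≃ Fin n) {c : Composition n} (hc : c ∈ suppM ω) :
    ∀ m : ℕ, c.sizeUpTo m ≤ ((jumpBlocks fun p => ((ω p : ℕ))).take m).sum := by
  classical
  obtain ⟨f, hf, hfle, hfib⟩ := hc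
  intro m
  have h1 : c.sizeUpTo m = ∑ i ∈ Finset.range m,
      (Finset.univ.filter fun p : α => f p = i + 1).card := by
    rw [Composition.sizeUpTo, sum_take_eq_sum_getD]
    refine Finset.sum_congr rfl fun i _ => ?_
    by_cases hi : i < c.length
    · rw [List.getD_eq_getElem _ _ (by rw [Composition.blocks_length]; omega)]
      have hfi := hfib ⟨i, hi⟩
      calc c.blocks[i] = c.blocksFun ⟨i, hi⟩ := rfl
        _ = {p : α | f p = i + 1}.ncard := by rw [← hfi]
        _ = (Finset.univ.filter fun p : α => f p = i + 1).card := ncard_eq_filter_card _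
    · rw [List.getD_eq_default _ _ (by rw [Composition.blocks_length]; omega)]
      symm
      rw [Finset.card_eq_zero, Finset.filter_eq_empty_iff]
      intro p _
      have := hfle p
      omega
  have h2 : ∑ i ∈ Finset.range m, (Finset.univ.filter fun p : α => f p = i + 1).card =
      (Finset.univ.filter fun p : α => f p ≤ m).card := by
    rw [Finset.card_eq_sum_card_fiberwise (f := fun p => f p - 1) (t := Finset.range m)
      (fun x hx => by
        simp only [Finset.mem_coe, Finset.mem_filter, Finset.mem_univ, true_and] at hx
        have := hf.1 x
        simp only [Finset.mem_coe, Finset.mem_range]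
        omega)]
    refine Finset.sum_congr rfl fun i hi => ?_
    rw [Finset.mem_range] at hi
    congr 1
    ext p
    simp only [Finset.mem_filter, Finset.mem_univ, true_and]
    have := hf.1 p
    omega
  have h3 : (Finset.univ.filter fun p : α => f p ≤ m).card ≤
      (Finset.univ.filter fun p : α => jumpOf (fun p : α => ((ω p : ℕ))) p < m).card := by
    apply Finset.card_le_card
    intro p hp
    simp only [Finset.mem_filter, Finset.mem_univ, true_and] at hp ⊢
    have := jump_lt_ppart hf p
    omega
  rw [h1, h2, jumpBlocks_take_sum]
  exact h3

end MSide
section FSide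
set_option linter.unusedSectionVars false

open Finset

lemma mem_Des_iff {n : ℕ} (w : Fin n → Fin n) {i : ℕ} (h0 : 0 < i) (hi : i < n) :
    i ∈ Des w ↔ w ⟨i, hi⟩ < w ⟨i - 1, by omega⟩ := by
  classical
  simp only [Des, Finset.mem_filter, Finset.mem_Ioo]
  constructor
  · rintro ⟨-, hi', h⟩
    exact h
  · intro h
    exact ⟨⟨h0, hi⟩, hi, h⟩

lemma word_mono {n : ℕ} (w : Fin n → Fin n) :
    ∀ (k j : ℕ) (hk : k < n) (hj : j < n), j ≤ k →
      (∀ i, j < i → i ≤ k → i ∉ Des w) → w ⟨j, hj⟩ ≤ w ⟨k, hk⟩ := by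
  intro k
  induction k with
  | zero =>
    intro j hk hj hjk _
    have : j = 0 := by omega
    subst this
    exact le_refl _
  | succ k IH =>
    intro j hk hj hjk hno
    rcases Nat.eq_or_lt_of_le hjk with rfl | hlt
    · exact le_refl _
    · have hjk' : j ≤ k := by omega
      have h1 : w ⟨j, hj⟩ ≤ w ⟨k, by omega⟩ :=
        IH j (by omega) hj hjk' (fun i h1 h2 => hno i h1 (by omega))
      have h2 : ¬ w ⟨k + 1, hk⟩ < w ⟨k + 1 - 1, by omega⟩ := by
        intro hcon
        exact hno (k + 1) (by omega) (le_refl _)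
          ((mem_Des_iff w (by omega) hk).mpr hcon)
      have h3 : w ⟨k + 1 - 1, by omega⟩ = w ⟨k, by omega⟩ := by
        congr 1
      rw [h3] at h2
      exact h1.trans (not_lt.mp h2)

variable {α : Type*} [PartialOrder α] [Fintype α] {n : ℕ}

/-- A linear extension whose descent composition dominates the jump partial sums. -/
lemma exists_suppF_jump [Nonempty α] (ω : α ≃ Fin n) :
    ∃ c : Composition n, c ∈ suppF ω ∧
      ∀ m : ℕ, ((jumpBlocks fun p => ((ω p : ℕ))).take m).sum ≤ c.sizeUpTo m := by
  classical
  set ωf : α → ℕ := fun p : α => ((ω p : ℕ)) with hωf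
  have hinj : Function.Injective ωf := omf_inj ω
  have hcard : Fintype.card α = n := card_eq_n ω
  have hn : 0 < n := by
    rw [← hcard]
    exact Fintype.card_pos
  have hbound : ∀ p : α, ωf p < n := fun p => (ω p).2
  set key : α → ℕ := fun p => jumpOf ωf p * n + ωf p with hkey
  have hkeylt : ∀ a b : α, jumpOf ωf a < jumpOf ωf b → key a < key b := by
    intro a b h
    have h1 : key a < (jumpOf ωf a + 1) * n := by
      rw [Nat.succ_mul]
      exact Nat.add_lt_add_left (hbound a) _
    have h2 : (jumpOf ωf a + 1) * n ≤ jumpOf ωf b * n := Nat.mul_le_mul_right n (by omega)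
    have h3 : jumpOf ωf b * n ≤ key b := Nat.le_add_right _ _
    omega
  have hkeylt2 : ∀ a b : α, jumpOf ωf a = jumpOf ωf b → (key a < key b ↔ ωf a < ωf b) := by
    intro a b h
    show jumpOf ωf a * n + ωf a < jumpOf ωf b * n + ωf b ↔ _
    rw [h]
    omega
  have hkeyinj : Function.Injective key := by
    intro a b hab
    rcases lt_trichotomy (jumpOf ωf a) (jumpOf ωf b) with h | h | h
    · exact absurd hab (Nat.ne_of_lt (hkeylt a b h))
    · apply hinj
      have : jumpOf ωf a * n + ωf a = jumpOf ωf b * n + ωf b := hab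
      rw [h] at this
      simpa using Nat.add_left_cancel this
    · exact absurd hab.symm (Nat.ne_of_lt (hkeylt b a h))
  obtain ⟨e, hsor⟩ := exists_sorted_equiv key hkeyinj hcard
  have hjumple : ∀ i j : Fin n, i ≤ j → jumpOf ωf (e i) ≤ jumpOf ωf (e j) := by
    intro i j hij
    rcases eq_or_lt_of_le hij with h | h
    · rw [(Fin.val_injective (congrArg Fin.val h) : i = j)]
    · by_contra hcon
      push_neg at hcon
      exact absurd (hsor i j h) (Nat.not_lt.mpr (Nat.le_of_lt (hkeylt (e j) (e i) hcon)))
  have hlin : IsLinext e := by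
    intro i j hij
    have hkeyij : key (e i) < key (e j) := by
      rcases jump_lt_or_eq ωf hinj hij with h | ⟨h1, h2⟩
      · exact hkeylt _ _ h
      · exact (hkeylt2 _ _ h1).mpr h2
    by_contra hcon
    push_neg at hcon
    rcases eq_or_lt_of_le hcon with h | h
    · rw [h] at hkeyij
      exact absurd hkeyij (lt_irrefl _)
    · exact absurd (hsor j i h) (by omega)
  set w : Fin n → Fin n := fun i => ω (e i) with hw
  set D : Finset ℕ := Des w with hDdef
  have hD : D ⊆ Finset.Ioo 0 n := Finset.filter_subset _ _
  have hcount : ∀ (j : ℕ) (hj : j < n),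
      (D.filter (· ≤ j)).card ≤ jumpOf ωf (e ⟨j, hj⟩) := by
    intro j
    induction j with
    | zero =>
      intro hj
      have : D.filter (· ≤ 0) = ∅ := by
        rw [Finset.filter_eq_empty_iff]
        intro x hx
        have := hD hx
        simp at this
        omega
      rw [this]
      simp
    | succ j IH =>
      intro hj
      have hj' : j < n := by omega
      have hIH := IH hj'
      have hmono : jumpOf ωf (e ⟨j, hj'⟩) ≤ jumpOf ωf (e ⟨j + 1, hj⟩) :=
        hjumple _ _ (by simp [Fin.le_def])
      by_cases hd : (j + 1) ∈ D
      · have hdesc : w ⟨j + 1, hj⟩ < w ⟨j + 1 - 1, by omega⟩ :=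
          (mem_Des_iff w (by omega) hj).mp hd
        have heq : w ⟨j + 1 - 1, by omega⟩ = w ⟨j, hj'⟩ := by congr 1
        rw [heq] at hdesc
        have hωlt : ωf (e ⟨j + 1, hj⟩) < ωf (e ⟨j, hj'⟩) := hdesc
        have hkeyj : key (e ⟨j, hj'⟩) < key (e ⟨j + 1, hj⟩) :=
          hsor _ _ (by simp [Fin.lt_def])
        have hjump : jumpOf ωf (e ⟨j, hj'⟩) < jumpOf ωf (e ⟨j + 1, hj⟩) := by
          rcases lt_trichotomy (jumpOf ωf (e ⟨j, hj'⟩)) (jumpOf ωf (e ⟨j + 1, hj⟩))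
            with h | h | h
          · exact h
          · have := (hkeylt2 _ _ h).mp hkeyj
            omega
          · have := hkeylt _ _ h
            omega
        have hsub : D.filter (· ≤ j + 1) ⊆ insert (j + 1) (D.filter (· ≤ j)) := by
          intro x hx
          rw [Finset.mem_filter] at hx
          rcases Nat.eq_or_lt_of_le hx.2 with h | h
          · exact Finset.mem_insert.mpr (Or.inl h)
          · exact Finset.mem_insert.mpr (Or.inr (Finset.mem_filter.mpr ⟨hx.1, by omega⟩))
        calc (D.filter (· ≤ j + 1)).card ≤ (insert (j + 1) (D.filter (· ≤ j))).card :=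
              Finset.card_le_card hsub
          _ ≤ (D.filter (· ≤ j)).card + 1 := Finset.card_insert_le _ _
          _ ≤ jumpOf ωf (e ⟨j, hj'⟩) + 1 := by omega
          _ ≤ jumpOf ωf (e ⟨j + 1, hj⟩) := hjump
      · have : D.filter (· ≤ j + 1) = D.filter (· ≤ j) := by
          ext x
          simp only [Finset.mem_filter]
          constructor
          · rintro ⟨hx, hle⟩
            refine ⟨hx, ?_⟩
            rcases Nat.eq_or_lt_of_le hle with h | h
            · exact absurd (h ▸ hx) hd
            · omega
          · rintro ⟨hx, hle⟩
            exact ⟨hx, by omega⟩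
        rw [this]
        omega
  refine ⟨compOfFinset n hn D hD, ⟨w, ⟨e, hlin, rfl⟩, compS_compOfFinset hn D hD⟩, ?_⟩
  intro m
  rw [jumpBlocks_take_sum]
  rw [← card_count_lt (compOfFinset n hn D hD) m]
  rw [compS_compOfFinset hn D hD]
  apply Finset.card_le_card_of_injOn (fun p => ((e.symm p : Fin n) : ℕ))
  · intro p hp
    simp only [Finset.mem_coe, Finset.mem_filter, Finset.mem_univ, true_and] at hp
    simp only [Finset.mem_coe, Finset.mem_filter, Finset.mem_range]
    refine ⟨(e.symm p).2, ?_⟩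
    calc (D.filter (· ≤ ((e.symm p : Fin n) : ℕ))).card
        ≤ jumpOf ωf (e ⟨((e.symm p : Fin n) : ℕ), (e.symm p).2⟩) := hcount _ _
      _ = jumpOf ωf p := by rw [show (⟨((e.symm p : Fin n) : ℕ), (e.symm p).2⟩ : Fin n)
            = e.symm p from rfl, Equiv.apply_symm_apply]
      _ < m := hp
  · intro a _ b _ hab
    exact e.symm.injective (Fin.val_injective hab)

end FSide
section FSide2
set_option linter.unusedSectionVars false

open Finset

variable {β : Type*} [PartialOrder β] [Fintype β] {n : ℕ}

lemma suppF_le_jump (τ : β ≃ Fin n) {c : Composition n} (hc : c ∈ suppF τ) :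
    ∀ m : ℕ, c.sizeUpTo m ≤ ((jumpBlocks fun p => ((τ p : ℕ))).take m).sum := by
  classical
  intro m
  rcases Nat.eq_zero_or_pos n with rfl | hn
  · have := c.sizeUpTo_le m
    omega
  obtain ⟨w, ⟨e, hlin, rfl⟩, hDes⟩ := hc
  set τf : β → ℕ := fun p : β => ((τ p : ℕ)) with hτf
  set w : Fin n → Fin n := fun i => τ (e i) with hw
  set f : β → ℕ := fun p => ((Des w).filter (· ≤ ((e.symm p : Fin n) : ℕ))).card + 1 with hf
  have hpos : ∀ a b : β, a < b → ((e.symm a : Fin n) : ℕ) < ((e.symm b : Fin n) : ℕ) := by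
    intro a b hab
    have : e (e.symm a) < e (e.symm b) := by
      rw [Equiv.apply_symm_apply, Equiv.apply_symm_apply]
      exact hab
    exact hlin _ _ this
  have hppart : IsPPart τf f := by
    refine ⟨fun p => by show 1 ≤ _ + 1; omega, fun a b hab => ?_, fun a b hab hs => ?_⟩
    · show _ + 1 ≤ _ + 1
      have hja := hpos a b hab
      have hsub : (Des w).filter (· ≤ ((e.symm a : Fin n) : ℕ)) ⊆
          (Des w).filter (· ≤ ((e.symm b : Fin n) : ℕ)) :=
        Finset.monotone_filter_right _ (fun x hx => by omega)
      have := Finset.card_le_card hsub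
      omega
    · show _ + 1 < _ + 1
      have hja := hpos a b hab
      have hwval : w (e.symm b) < w (e.symm a) := by
        show τ (e (e.symm b)) < τ (e (e.symm a))
        rw [Equiv.apply_symm_apply, Equiv.apply_symm_apply]
        exact hs
      have hex : ∃ i, ((e.symm a : Fin n) : ℕ) < i ∧ i ≤ ((e.symm b : Fin n) : ℕ) ∧
          i ∈ Des w := by
        by_contra hcon
        push_neg at hcon
        have := word_mono w ((e.symm b : Fin n) : ℕ) ((e.symm a : Fin n) : ℕ)
          (e.symm b).2 (e.symm a).2 (by omega) (fun i h1 h2 => hcon i h1 h2)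
        have h1 : w (e.symm a) ≤ w (e.symm b) := by
          convert this using 2
        exact absurd hwval (not_lt.mpr h1)
      obtain ⟨i, hi1, hi2, hiD⟩ := hex
      have hss : (Des w).filter (· ≤ ((e.symm a : Fin n) : ℕ)) ⊂
          (Des w).filter (· ≤ ((e.symm b : Fin n) : ℕ)) := by
        rw [Finset.ssubset_iff_of_subset (Finset.monotone_filter_right _ (fun x hx => by omega))]
        exact ⟨i, Finset.mem_filter.mpr ⟨hiD, hi2⟩, fun hmem => by
          have := (Finset.mem_filter.mp hmem).2
          omega⟩
      have := Finset.card_lt_card hss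
      omega
  have hcount : c.sizeUpTo m =
      ((Finset.range n).filter fun j => ((Des w).filter (· ≤ j)).card < m).card := by
    rw [← card_count_lt c m, hDes]
  rw [hcount, jumpBlocks_take_sum]
  have hstep : ((Finset.range n).filter fun j => ((Des w).filter (· ≤ j)).card < m).card ≤
      (Finset.univ.filter fun p : β => f p ≤ m).card := by
    apply Finset.card_le_card_of_injOn (fun j => e ⟨min j (n - 1), by omega⟩)
    · intro j hj
      simp only [Finset.mem_coe, Finset.mem_filter, Finset.mem_range] at hj
      obtain ⟨hjn, hjcount⟩ := hj
      have hmin : min j (n - 1) = j := by omega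
      simp only [Finset.mem_coe, Finset.mem_filter, Finset.mem_univ, true_and]
      show ((Des w).filter (· ≤ ((e.symm (e ⟨min j (n-1), by omega⟩) : Fin n) : ℕ))).card + 1 ≤ m
      rw [Equiv.symm_apply_apply]
      simp only [hmin]
      omega
    · intro a ha b hb hab
      simp only [Finset.mem_coe, Finset.mem_filter, Finset.mem_range] at ha hb
      have := e.injective hab
      have h2 : min a (n-1) = min b (n-1) := congrArg Fin.val this
      omega
  have hstep2 : (Finset.univ.filter fun p : β => f p ≤ m).card ≤
      (Finset.univ.filter fun p : β => jumpOf τf p < m).card := by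
    apply Finset.card_le_card
    intro p hp
    simp only [Finset.mem_filter, Finset.mem_univ, true_and] at hp ⊢
    have := jump_lt_ppart hppart p
    omega
  exact hstep.trans hstep2

end FSide2

section Main
open Finset

lemma jumpBlocks_take_zero_of_empty {α : Type*} [PartialOrder α] [Fintype α] [IsEmpty α]
    (ωf : α → ℕ) (m : ℕ) : ((jumpBlocks ωf).take m).sum = 0 := by
  apply List.sum_eq_zero
  intro x hx
  have hx' := List.mem_of_mem_take hx
  rw [jumpBlocks] at hx'
  obtain ⟨i, -, rfl⟩ := List.mem_map.mp hx'
  rw [Set.eq_empty_of_isEmpty {b : α | jumpOf ωf b = i}]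
  exact Set.ncard_empty _

end Main

/-- `M`-support containment (in particular, `F`-support containment)
implies `jump(P,ω) ≤_dom jump(Q,τ)`. -/
theorem stmt_8 {α β : Type*} [PartialOrder α] [PartialOrder β] [Fintype α] [Fintype β]
    {n : ℕ} (ω : α ≃ Fin n) (τ : β ≃ Fin n) :
    (suppM ω ⊆ suppM τ →
      ∀ m : ℕ, ((jumpBlocks fun p => ((ω p : ℕ))).take m).sum ≤
        ((jumpBlocks fun p => ((τ p : ℕ))).take m).sum) ∧
    (suppF ω ⊆ suppF τ →
      ∀ m : ℕ, ((jumpBlocks fun p => ((ω p : ℕ))).take m).sum ≤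
        ((jumpBlocks fun p => ((τ p : ℕ))).take m).sum) := by
  constructor
  · intro h m
    by_cases hα : Nonempty α
    · obtain ⟨c, hc, heq⟩ := exists_suppM_jump ω
      rw [heq m]
      exact suppM_le_jump τ (h hc) m
    · have : IsEmpty α := not_nonempty_iff.mp hα
      rw [jumpBlocks_take_zero_of_empty]
      exact Nat.zero_le _
  · intro h m
    by_cases hα : Nonempty α
    · obtain ⟨c, hc, hle⟩ := exists_suppF_jump ω
      exact (hle m).trans (suppF_le_jump τ (h hc) m)
    · have : IsEmpty α := not_nonempty_iff.mp hα
      rw [jumpBlocks_take_zero_of_empty]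
      exact Nat.zero_le _
end

section
/- If labeled posets (P,ω) and (Q,τ) satisfy supp_F(P,ω) ⊆ supp_F(Q,τ), then the maximum number of strict edges in a maximal chain of (P,ω) is greater than or equal to the maximum number of strict edges in a maximal chain of (Q,τ); likewise, the maximum number of weak edges in a maximal chain of (P,ω) is greater than or equal to the maximum number of weak edges in a maximal chain of (Q,τ). -/
open scoped BigOperators

namespace Stmt9Aux

open Finset

/-! ### Generic list counting helpers -/

theorem countP_eq_card {γ : Type*} (L : List γ) (p : γ → Bool) :
    L.countP p = (Finset.univ.filter (fun i : Fin L.length => p (L.get i))).card := by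
  conv_lhs => rw [← List.ofFn_get L]
  rw [List.ofFn_eq_map, List.countP_map]
  classical
  rw [← List.toFinset_finRange, ← List.toFinset_filter,
    List.card_toFinset, List.Nodup.dedup (((List.nodup_finRange _)).filter _),
    List.countP_eq_length_filter]
  rfl

theorem zipTail_length {γ : Type*} (l : List γ) : (l.zip l.tail).length = l.length - 1 := by
  simp [List.length_zip]

theorem zipTail_get {γ : Type*} (l : List γ) (i : ℕ) (h : i < (l.zip l.tail).length) :
    (l.zip l.tail).get ⟨i, h⟩ =
      (l.get ⟨i, by simp [List.length_zip] at h; omega⟩,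
       l.get ⟨i+1, by simp [List.length_zip] at h; omega⟩) := by
  simp [List.get_eq_getElem, List.getElem_zip, List.getElem_tail]

theorem zipTail_append {γ : Type*} (l : List γ) (h : l ≠ []) (b : γ) :
    (l ++ [b]).zip (l ++ [b]).tail = l.zip l.tail ++ [(l.getLast h, b)] := by
  induction l with
  | nil => simp at h
  | cons a l ih =>
    cases l with
    | nil => simp [List.getLast]
    | cons c l =>
      have := ih (by simp)
      simp only [List.cons_append, List.tail_cons, List.zip_cons_cons] at this ⊢
      rw [this, List.getLast_cons (by simp : (c :: l : List γ) ≠ [])]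

theorem card_filter_fin_eq {k : ℕ} (q : ℕ → Prop) [DecidablePred q] :
    (Finset.univ.filter (fun i : Fin k => q i.val)).card =
      ((Finset.range k).filter q).card := by
  apply Finset.card_bij (fun (i : Fin k) _ => (i : ℕ))
  · intro a ha
    simp only [Finset.mem_filter, Finset.mem_univ, true_and] at ha
    simp [ha, a.isLt]
  · intro a _ b _ hab
    exact Fin.ext hab
  · intro b hb
    simp only [Finset.mem_filter, Finset.mem_range] at hb
    exact ⟨⟨b, hb.1⟩, by simp [hb.2], rfl⟩

variable {α : Type*}

theorem strictCountUp_eq_card (ω : α → ℕ) (l : List α) (d : α) :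
    strictCountUp ω l = ((Finset.range (l.length - 1)).filter
      (fun i => ω (l.getD (i+1) d) < ω (l.getD i d))).card := by
  classical
  rw [strictCountUp, countP_eq_card]
  have h1 : (Finset.univ.filter (fun i : Fin (l.zip l.tail).length =>
        decide (ω ((l.zip l.tail).get i).2 < ω ((l.zip l.tail).get i).1) = true)).card
      = (Finset.univ.filter (fun i : Fin (l.zip l.tail).length =>
        (fun j => ω (l.getD (j+1) d) < ω (l.getD j d)) i.val)).card := by
    congr 1
    apply Finset.filter_congr
    intro i _
    have hlen : (l.zip l.tail).length = l.length - 1 := zipTail_length l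
    have hilt : (i : ℕ) < (l.zip l.tail).length := i.isLt
    have h2 : (i : ℕ) < l.length := by omega
    have h3 : (i : ℕ) + 1 < l.length := by omega
    have := zipTail_get l i i.isLt
    simp only [Fin.eta] at this
    rw [this]
    simp [List.getD_eq_getElem, h2, h3, List.get_eq_getElem]
  rw [h1, ← zipTail_length l]
  exact card_filter_fin_eq (fun j => ω (l.getD (j+1) d) < ω (l.getD j d))


/-! ### Saturated chains from a minimal element up to `b` -/

section Chains

variable [PartialOrder α]

/-- A saturated chain from a minimal element up to `b`, listed bottom-to-top. -/
def UpChain (b : α) (l : List α) : Prop :=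
  l ≠ [] ∧ l.getLast? = some b ∧ List.Chain' (· ⋖ ·) l ∧ ∀ x ∈ l.head?, IsMin x

theorem UpChain.append {a b : α} {l : List α} (h : UpChain a l) (hab : a ⋖ b) :
    UpChain b (l ++ [b]) := by
  obtain ⟨hne, hlast, hchain, hhead⟩ := h
  refine ⟨by simp, by simp [List.getLast?_concat], ?_, ?_⟩
  · change List.IsChain _ (l ++ [b])
    rw [List.isChain_append]
    refine ⟨hchain, List.isChain_singleton b, ?_⟩
    intro x hx y hy
    simp only [List.head?_cons, Option.mem_def, Option.some.injEq] at hy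
    subst hy
    rw [hlast] at hx
    simp only [Option.mem_def, Option.some.injEq] at hx
    subst hx
    exact hab
  · cases l with
    | nil => exact absurd rfl hne
    | cons c t => simpa using hhead

theorem strictCountUp_append (ω : α → ℕ) {a : α} {l : List α} (hne : l ≠ [])
    (hlast : l.getLast? = some a) (b : α) :
    strictCountUp ω (l ++ [b]) = strictCountUp ω l + (if ω b < ω a then 1 else 0) := by
  have hl : l.getLast hne = a := by
    rw [List.getLast?_eq_getLast hne] at hlast
    exact Option.some.inj hlast
  rw [strictCountUp, strictCountUp, zipTail_append l hne b, List.countP_append]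
  simp only [List.countP_cons, List.countP_nil, hl, Nat.zero_add]
  by_cases hab : ω b < ω a <;> simp [hab]

theorem chain'_covBy_nodup {l : List α} (h : List.Chain' (· ⋖ ·) l) : l.Nodup := by
  have h2 : List.Chain' (· < ·) l := List.IsChain.imp (fun a b hab => hab.lt) h
  have h3 : l.Pairwise (· < ·) := List.isChain_iff_pairwise.mp h2
  exact h3.imp (fun hab => ne_of_lt hab)

theorem strictCountUp_le_card [Fintype α] (ω : α → ℕ) {l : List α}
    (h : List.Chain' (· ⋖ ·) l) : strictCountUp ω l ≤ Fintype.card α :=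
  calc strictCountUp ω l ≤ (l.zip l.tail).length := List.countP_le_length
  _ = l.length - 1 := zipTail_length l
  _ ≤ Fintype.card α := le_trans (Nat.sub_le _ _) ((chain'_covBy_nodup h).length_le_card)

/-- The jump of `b`: max number of strict edges on a saturated chain from a minimal
element up to `b`. -/
noncomputable def Jf (ω : α → ℕ) (b : α) : ℕ :=
  sSup {k | ∃ l, UpChain b l ∧ strictCountUp ω l = k}

variable [Fintype α] (ω : α → ℕ)

theorem Jf_bddAbove (b : α) :
    BddAbove {k | ∃ l, UpChain b l ∧ strictCountUp ω l = k} := by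
  refine ⟨Fintype.card α, ?_⟩
  rintro k ⟨l, hl, rfl⟩
  exact strictCountUp_le_card ω hl.2.2.1

theorem exists_upChain (b : α) : ∃ l, UpChain b l := by
  refine wellFounded_lt.induction (C := fun b => ∃ l, UpChain b l) b ?_
  intro x IH
  by_cases hx : IsMin x
  · exact ⟨[x], by simp, by simp, List.isChain_singleton x, by simpa⟩
  · obtain ⟨a, ha⟩ := exists_covBy_of_wellFoundedGT hx
    obtain ⟨l, hl⟩ := IH a ha.lt
    exact ⟨l ++ [x], hl.append ha⟩

theorem Jf_spec (b : α) : ∃ l, UpChain b l ∧ strictCountUp ω l = Jf ω b := by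
  obtain ⟨l, hl⟩ := exists_upChain (α := α) b
  have hmem : Jf ω b ∈ {k | ∃ l, UpChain b l ∧ strictCountUp ω l = k} :=
    Nat.sSup_mem ⟨strictCountUp ω l, ⟨l, hl, rfl⟩⟩ (Jf_bddAbove ω b)
  exact hmem

theorem le_Jf {b : α} {l : List α} (hl : UpChain b l) : strictCountUp ω l ≤ Jf ω b :=
  le_csSup (Jf_bddAbove ω b) ⟨l, hl, rfl⟩

theorem Jf_covBy {a b : α} (hab : a ⋖ b) :
    Jf ω a + (if ω b < ω a then 1 else 0) ≤ Jf ω b := by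
  obtain ⟨l, hl, hc⟩ := Jf_spec ω a
  have h2 := le_Jf ω (hl.append hab)
  rw [strictCountUp_append ω hl.1 hl.2.1 b, hc] at h2
  exact h2

theorem Jf_covBy_le {a b : α} (hab : a ⋖ b) : Jf ω a ≤ Jf ω b := by
  have := Jf_covBy ω hab
  split at this <;> omega

theorem Jf_covBy_strict {a b : α} (hab : a ⋖ b) (hs : ω b < ω a) :
    Jf ω a + 1 ≤ Jf ω b := by
  have := Jf_covBy ω hab
  rw [if_pos hs] at this
  exact this

theorem Jf_lt_mono : ∀ a b : α, a < b → Jf ω a ≤ Jf ω b := by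
  haveI hsa : IsStronglyAtomic α := IsStronglyAtomic.of_wellFounded_lt wellFounded_lt
  intro a
  refine wellFounded_gt.induction (C := fun a => ∀ b : α, a < b → Jf ω a ≤ Jf ω b) a ?_
  intro x IH b hxb
  obtain ⟨c, hxc, hcb⟩ := hxb.exists_covby_le
  rcases eq_or_lt_of_le hcb with rfl | hcb'
  · exact Jf_covBy_le ω hxc
  · exact le_trans (Jf_covBy_le ω hxc) (IH c hxc.lt b hcb')

theorem Jf_mono {a b : α} (hab : a ≤ b) : Jf ω a ≤ Jf ω b := by
  rcases eq_or_lt_of_le hab with rfl | h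
  · exact le_rfl
  · exact Jf_lt_mono ω a b h

theorem Jf_eq_weak : ∀ a b : α, a < b → Jf ω a = Jf ω b → ω a ≤ ω b := by
  haveI hsa : IsStronglyAtomic α := IsStronglyAtomic.of_wellFounded_lt wellFounded_lt
  intro a
  refine wellFounded_gt.induction
    (C := fun a => ∀ b : α, a < b → Jf ω a = Jf ω b → ω a ≤ ω b) a ?_
  intro x IH b hxb heq
  obtain ⟨c, hxc, hcb⟩ := hxb.exists_covby_le
  have h1 : Jf ω x ≤ Jf ω c := Jf_covBy_le ω hxc
  have h2 : Jf ω c ≤ Jf ω b := Jf_mono ω hcb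
  have hxcw : ω x ≤ ω c := by
    by_contra hlt
    push_neg at hlt
    have := Jf_covBy_strict ω hxc hlt
    omega
  rcases eq_or_lt_of_le hcb with rfl | hcb'
  · exact hxcw
  · exact le_trans hxcw (IH c hxc.lt b hcb' (by omega))

end Chains


/-! ### arithmetic helpers for keys -/

theorem key_le {n J1 J2 r1 r2 : ℕ} (h2 : r2 < n) (h : n*J1 + r1 ≤ n*J2 + r2) :
    J1 ≤ J2 := by
  by_contra hc
  push_neg at hc
  have h4 : n * (J2 + 1) ≤ n * J1 := Nat.mul_le_mul_left n hc
  have h5 : n * (J2 + 1) = n * J2 + n := by ring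
  rw [h5] at h4
  linarith

theorem key_lt {n J1 J2 r1 r2 : ℕ} (hr : r2 < r1) (h : n*J1 + r1 ≤ n*J2 + r2) :
    J1 < J2 := by
  by_contra hc
  push_neg at hc
  have h4 : n * J2 ≤ n * J1 := Nat.mul_le_mul_left n hc
  linarith

theorem key_lt_of_lt {n J1 J2 r1 r2 : ℕ} (h1 : r1 < n) (hJ : J1 < J2) :
    n*J1 + r1 < n*J2 + r2 := by
  have h4 : n * (J1 + 1) ≤ n * J2 := Nat.mul_le_mul_left n hJ
  have h5 : n * (J1 + 1) = n * J1 + n := by ring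
  rw [h5] at h4
  linarith

/-! ### the greedy linear extension -/

section GreedySort

variable [PartialOrder α] [Fintype α] {n : ℕ}

/-- Maximum jump. -/
noncomputable def maxJω (ω : α ≃ Fin n) : ℕ :=
  sSup (Set.range (Jf (fun p => ((ω p : ℕ)))))

theorem Jf_le_card (ω : α → ℕ) (b : α) : Jf ω b ≤ Fintype.card α :=
  csSup_le' (by rintro k ⟨l, hl, rfl⟩; exact strictCountUp_le_card ω hl.2.2.1)

theorem maxJω_bddAbove (ω : α ≃ Fin n) :
    BddAbove (Set.range (Jf (fun p => ((ω p : ℕ))))) :=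
  ⟨Fintype.card α, by rintro k ⟨b, rfl⟩; exact Jf_le_card _ b⟩

theorem Jf_le_maxJω (ω : α ≃ Fin n) (b : α) :
    Jf (fun p => ((ω p : ℕ))) b ≤ maxJω ω :=
  le_csSup (maxJω_bddAbove ω) ⟨b, rfl⟩

theorem exists_good_linext (ω : α ≃ Fin n) :
    ∃ w ∈ Linext ω, (Des w).card ≤ maxJω ω := by
  classical
  set ωn : α → ℕ := fun p => ((ω p : ℕ)) with hωn
  set key : Fin n → ℕ := fun i => n * Jf ωn (ω.symm i) + (i : ℕ) with hkey
  set σ := Tuple.sort key with hσ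
  have hmono : Monotone (key ∘ σ) := Tuple.monotone_sort key
  have hkeyval : ∀ i : Fin n, key i = n * Jf ωn (ω.symm i) + (i : ℕ) := fun i => rfl
  -- the order comparison lemma
  have hcmp : ∀ i j : Fin n, ω.symm i < ω.symm j → key i < key j := by
    intro i j hij
    have hJ : Jf ωn (ω.symm i) ≤ Jf ωn (ω.symm j) :=
      Jf_lt_mono ωn (ω.symm i) (ω.symm j) hij
    rcases lt_or_eq_of_le hJ with hJ' | hJ'
    · exact key_lt_of_lt i.isLt hJ'
    · have hw : ωn (ω.symm i) ≤ ωn (ω.symm j) := Jf_eq_weak ωn _ _ hij hJ'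
      have hw2 : (i : ℕ) ≤ (j : ℕ) := by simpa [hωn] using hw
      have hne : (i : ℕ) ≠ (j : ℕ) := by
        intro hc
        exact absurd (congrArg ω.symm (Fin.ext hc)) (by intro hc2; exact lt_irrefl _ (hc2 ▸ hij))
      rw [hkeyval, hkeyval, hJ']
      omega
  set e : Fin n ≃ α := σ.trans ω.symm with he'
  have he : IsLinext e := by
    intro i j hij
    have h1 : key (σ i) < key (σ j) := hcmp (σ i) (σ j) hij
    by_contra hc
    push_neg at hc
    exact absurd (hmono hc) (not_le_of_gt h1)
  refine ⟨fun i => σ i, ⟨e, he, by funext i; simp [he']⟩, ?_⟩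
  -- bound the number of descents
  set g : Fin n → ℕ := fun i => Jf ωn (ω.symm (σ i)) with hg
  have hgval : ∀ i, key (σ i) = n * g i + ((σ i : ℕ)) := fun i => rfl
  have hgmono : ∀ i j : Fin n, i ≤ j → g i ≤ g j := by
    intro i j hij
    have := hmono hij
    rw [Function.comp_apply, Function.comp_apply, hgval, hgval] at this
    exact key_le (σ j).isLt this
  have hgmax : ∀ i, g i ≤ maxJω ω := fun i => Jf_le_maxJω ω _
  have hcard := Finset.card_le_card_of_injOn
    (f := fun i : ℕ => if h : i - 1 < n then g ⟨i - 1, h⟩ else 0)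
    (s := Des (fun i => σ i)) (t := Finset.range (maxJω ω)) ?_ ?_
  · simpa using hcard
  · -- maps to range
    intro i hi
    rw [Des, Finset.mem_coe, Finset.mem_filter, Finset.mem_Ioo] at hi
    obtain ⟨⟨hi0, hin⟩, hilt, hdesc⟩ := hi
    have h1 : i - 1 < n := by omega
    dsimp only
    rw [dif_pos h1]
    rw [Finset.mem_coe, Finset.mem_range]
    -- g ⟨i-1⟩ < g ⟨i⟩ ≤ maxJ
    have hle : (⟨i - 1, h1⟩ : Fin n) ≤ ⟨i, hin⟩ := by
      simp only [Fin.mk_le_mk]; omega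
    have hkey2 := hmono hle
    rw [Function.comp_apply, Function.comp_apply, hgval, hgval] at hkey2
    have hvlt : ((σ ⟨i, hin⟩ : ℕ)) < ((σ ⟨i - 1, h1⟩ : ℕ)) := hdesc
    have := key_lt hvlt hkey2
    calc g ⟨i - 1, h1⟩ < g ⟨i, hin⟩ := this
    _ ≤ maxJω ω := hgmax _
  · -- injective on Des
    intro i hi j hj hij
    simp only [Des, Finset.mem_coe, Finset.mem_filter, Finset.mem_Ioo] at hi hj
    dsimp only at hij
    obtain ⟨⟨hi0, hin⟩, hilt, hdesci⟩ := hi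
    obtain ⟨⟨hj0, hjn⟩, hjlt, hdescj⟩ := hj
    have h1 : i - 1 < n := by omega
    have h2 : j - 1 < n := by omega
    rw [dif_pos h1, dif_pos h2] at hij
    by_contra hne
    -- wlog i < j
    have hstep : ∀ i j : ℕ, ∀ (hi0 : 0 < i) (hin : i < n) (hj0 : 0 < j) (hjn : j < n)
        (h1 : i - 1 < n) (h2 : j - 1 < n),
        i < j → (σ ⟨i, hin⟩ : ℕ) < (σ ⟨i - 1, h1⟩ : ℕ) →
        g ⟨i - 1, h1⟩ < g ⟨j - 1, h2⟩ := by
      intro i j hi0 hin hj0 hjn h1 h2 hlt hdesc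
      have hle : (⟨i - 1, h1⟩ : Fin n) ≤ ⟨i, hin⟩ := by
        simp only [Fin.mk_le_mk]; omega
      have hkey2 := hmono hle
      rw [Function.comp_apply, Function.comp_apply, hgval, hgval] at hkey2
      have hgi : g ⟨i - 1, h1⟩ < g ⟨i, hin⟩ := key_lt hdesc hkey2
      have hle2 : (⟨i, hin⟩ : Fin n) ≤ ⟨j - 1, h2⟩ := by
        simp only [Fin.mk_le_mk]; omega
      exact lt_of_lt_of_le hgi (hgmono _ _ hle2)
    rcases lt_trichotomy i j with h | h | h
    · exact absurd hij (ne_of_lt (hstep i j hi0 hin hj0 hjn h1 h2 h hdesci))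
    · exact hne h
    · exact absurd hij.symm (ne_of_lt (hstep j i hj0 hjn hi0 hin h2 h1 h hdescj))

theorem exists_maxChain_maxJ (ω : α ≃ Fin n) (hne : Nonempty α) :
    ∃ l, IsMaxChainList l ∧ strictCountUp (fun p => ((ω p : ℕ))) l = maxJω ω := by
  classical
  set ωn : α → ℕ := fun p => ((ω p : ℕ)) with hωn
  have hbdd := maxJω_bddAbove ω
  have hmem : maxJω ω ∈ Set.range (Jf ωn) :=
    Nat.sSup_mem (Set.range_nonempty _) hbdd
  obtain ⟨b, hb⟩ := hmem
  obtain ⟨b', hb'mem, hb'max⟩ :=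
    Set.Finite.exists_maximalFor id {x : α | b ≤ x} (Set.toFinite _) ⟨b, le_rfl⟩
  have hmax : IsMax b' := by
    intro x hx
    have hbx : b ≤ x := le_trans hb'mem hx
    have := hb'max hbx hx
    exact this
  have hJb' : Jf ωn b' = maxJω ω :=
    le_antisymm (Jf_le_maxJω ω b') (hb ▸ Jf_mono ωn hb'mem)
  obtain ⟨l, hl, hc⟩ := Jf_spec ωn b'
  refine ⟨l, ⟨hl.1, hl.2.2.1, hl.2.2.2, ?_⟩, by rw [hc, hJb']⟩
  intro x hx
  rw [hl.2.1] at hx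
  simp only [Option.mem_def, Option.some.injEq] at hx
  exact hx ▸ hmax

end GreedySort


/-! ### lower bound: strict edges of a chain vs descents of a linear extension -/

theorem descent_exists {n : ℕ} (w : Fin n → Fin n) (a b : Fin n) (hab : a < b)
    (hw : w b < w a) :
    ∃ r : ℕ, (a : ℕ) ≤ r ∧ r + 1 ≤ (b : ℕ) ∧
      ∃ h2 : r + 1 < n, w ⟨r + 1, h2⟩ < w ⟨r, by omega⟩ := by
  by_contra hc
  push_neg at hc
  have key : ∀ k : ℕ, (a : ℕ) + k ≤ (b : ℕ) →
      ∀ (hk : (a : ℕ) + k < n), w a ≤ w ⟨(a : ℕ) + k, hk⟩ := by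
    intro k
    induction k with
    | zero =>
      intro _ hk
      have : (⟨(a : ℕ) + 0, hk⟩ : Fin n) = a := by
        apply Fin.ext; simp
      rw [this]
    | succ k IH =>
      intro hkb hk
      have h1 : (a : ℕ) + k ≤ (b : ℕ) := by omega
      have h1' : (a : ℕ) + k < n := by omega
      have h2 : (a : ℕ) + k + 1 < n := hk
      have step := hc ((a : ℕ) + k) (by omega) (by omega) h2
      have := le_trans (IH h1 h1') step
      exact this
  have hfin := key ((b : ℕ) - (a : ℕ)) (by omega) (by have := b.isLt; omega)
  have heq : (⟨(a : ℕ) + ((b : ℕ) - (a : ℕ)), by have := b.isLt; omega⟩ : Fin n) = b := by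
    apply Fin.ext
    simp only []
    have : (a : ℕ) ≤ (b : ℕ) := le_of_lt hab
    omega
  rw [heq] at hfin
  exact absurd hfin (not_le_of_gt hw)

theorem chain_count_le_des {β : Type*} [PartialOrder β] {n : ℕ} (τ : β ≃ Fin n)
    (w : Fin n → Fin n) (hw : w ∈ Linext τ) (l : List β)
    (hl : List.Chain' (· ⋖ ·) l) (hne : l ≠ []) :
    strictCountUp (fun p => ((τ p : ℕ))) l ≤ (Des w).card := by
  classical
  obtain ⟨e, he, rfl⟩ := hw
  set d := l.head hne with hd
  rw [strictCountUp_eq_card _ l d]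
  have hpw : l.Pairwise (· < ·) :=
    List.isChain_iff_pairwise.mp (List.IsChain.imp (fun a b h => h.lt) hl)
  have hget : ∀ i j : ℕ, i < l.length → j < l.length → i < j →
      l.getD i d < l.getD j d := by
    intro i j hi hj hij
    rw [List.getD_eq_getElem l d hi, List.getD_eq_getElem l d hj]
    exact List.pairwise_iff_getElem.mp hpw i j hi hj hij
  have hpos : ∀ i j : ℕ, i < l.length → j < l.length → i < j →
      ((e.symm (l.getD i d) : Fin n) : ℕ) < ((e.symm (l.getD j d) : Fin n) : ℕ) := by
    intro i j hi hj hij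
    have h1 : e (e.symm (l.getD i d)) < e (e.symm (l.getD j d)) := by
      rw [e.apply_symm_apply, e.apply_symm_apply]
      exact hget i j hi hj hij
    exact he _ _ h1
  set S := (Finset.range (l.length - 1)).filter
    (fun i => (fun p => ((τ p : ℕ))) (l.getD (i+1) d) < (fun p => ((τ p : ℕ))) (l.getD i d))
    with hS
  have H : ∀ i ∈ S, ∃ r : ℕ,
      ((e.symm (l.getD i d) : Fin n) : ℕ) ≤ r ∧
      r + 1 ≤ ((e.symm (l.getD (i+1) d) : Fin n) : ℕ) ∧
      (r + 1) ∈ Des (fun j => τ (e j)) := by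
    intro i hi
    rw [hS, Finset.mem_filter, Finset.mem_range] at hi
    obtain ⟨hi1, hi2⟩ := hi
    have hil : i < l.length := by omega
    have hil1 : i + 1 < l.length := by omega
    set a := e.symm (l.getD i d) with ha
    set b := e.symm (l.getD (i+1) d) with hb
    have hab : a < b := by
      have := hpos i (i+1) hil hil1 (by omega)
      exact this
    have hwv : (fun j => τ (e j)) b < (fun j => τ (e j)) a := by
      dsimp only
      rw [hb, ha, e.apply_symm_apply, e.apply_symm_apply]
      exact hi2
    obtain ⟨r, hr1, hr2, hr3, hr4⟩ := descent_exists (fun j => τ (e j)) a b hab hwv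
    refine ⟨r, hr1, hr2, ?_⟩
    rw [Des, Finset.mem_filter, Finset.mem_Ioo]
    have hb_lt : (b : ℕ) < n := b.isLt
    refine ⟨⟨by omega, hr3⟩, hr3, ?_⟩
    have : (⟨r + 1 - 1, by omega⟩ : Fin n) = (⟨r, by omega⟩ : Fin n) := by
      apply Fin.ext; simp
    rw [this]
    exact hr4
  choose! r hr1 hr2 hr3 using H
  apply Finset.card_le_card_of_injOn (fun i => r i + 1)
  · intro i hi
    exact hr3 i hi
  · intro i hi j hj hij
    simp only [Finset.mem_coe] at hi hj
    have hi' := hi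
    have hj' := hj
    rw [hS, Finset.mem_filter, Finset.mem_range] at hi' hj'
    simp only [add_left_inj] at hij
    by_contra hne2
    have hstep : ∀ i j : ℕ, i ∈ S → j ∈ S → i < j → r i < r j := by
      intro i j hi hj hlt
      have hi' := hi
      have hj' := hj
      rw [hS, Finset.mem_filter, Finset.mem_range] at hi' hj'
      have h1 : r i + 1 ≤ ((e.symm (l.getD (i+1) d) : Fin n) : ℕ) := hr2 i hi
      have h2 : ((e.symm (l.getD j d) : Fin n) : ℕ) ≤ r j := hr1 j hj
      have h3 : ((e.symm (l.getD (i+1) d) : Fin n) : ℕ) ≤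
          ((e.symm (l.getD j d) : Fin n) : ℕ) := by
        rcases eq_or_lt_of_le (by omega : i + 1 ≤ j) with heq | hlt2
        · rw [heq]
        · exact le_of_lt (hpos (i+1) j (by omega) (by omega) hlt2)
      omega
    rcases lt_trichotomy i j with h | h | h
    · exact absurd hij (ne_of_lt (hstep i j hi hj h))
    · exact hne2 h
    · exact absurd hij.symm (ne_of_lt (hstep j i hj hi h))


/-! ### building a composition with a prescribed partial-sum set -/

/-- successive differences of a sorted list, relative to `prev`, closing at `n`. -/
def diffList (n : ℕ) : List ℕ → ℕ → List ℕ
  | [], prev => [n - prev]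
  | x :: xs, prev => (x - prev) :: diffList n xs x

theorem diffList_length (n : ℕ) (L : List ℕ) (prev : ℕ) :
    (diffList n L prev).length = L.length + 1 := by
  induction L generalizing prev with
  | nil => rfl
  | cons x xs ih => simp [diffList, ih]

theorem diffList_sum (n : ℕ) (L : List ℕ) (prev : ℕ)
    (hp : (prev :: L).Pairwise (· < ·)) (hn : ∀ x ∈ L, x < n) (hpn : prev ≤ n) :
    (diffList n L prev).sum = n - prev := by
  induction L generalizing prev with
  | nil => simp [diffList]
  | cons x xs ih =>
    have hx : prev < x := (List.pairwise_cons.mp hp).1 x (by simp)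
    have hxn : x < n := hn x (by simp)
    have hrec : (diffList n xs x).sum = n - x :=
      ih x (List.pairwise_cons.mp hp).2 (fun y hy => hn y (by simp [hy])) (le_of_lt hxn)
    simp only [diffList, List.sum_cons, hrec]
    omega

theorem diffList_pos (n : ℕ) (L : List ℕ) (prev : ℕ)
    (hp : (prev :: L).Pairwise (· < ·)) (hn : ∀ x ∈ L, x < n) (hpn : prev < n) :
    ∀ b ∈ diffList n L prev, 0 < b := by
  induction L generalizing prev with
  | nil =>
    intro b hb
    simp only [diffList, List.mem_singleton] at hb
    omega
  | cons x xs ih =>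
    intro b hb
    have hx : prev < x := (List.pairwise_cons.mp hp).1 x (by simp)
    have hxn : x < n := hn x (by simp)
    simp only [diffList, List.mem_cons] at hb
    rcases hb with rfl | hb
    · omega
    · exact ih x (List.pairwise_cons.mp hp).2 (fun y hy => hn y (by simp [hy])) hxn b hb

theorem diffList_take (n : ℕ) (L : List ℕ) (prev : ℕ)
    (hp : (prev :: L).Pairwise (· < ·)) (i : ℕ) (hi : i < L.length) :
    ((diffList n L prev).take (i + 1)).sum = L.getD i 0 - prev := by
  induction L generalizing prev i with
  | nil => simp at hi
  | cons x xs ih =>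
    have hx : prev < x := (List.pairwise_cons.mp hp).1 x (by simp)
    have hp2 : (x :: xs).Pairwise (· < ·) := (List.pairwise_cons.mp hp).2
    cases i with
    | zero => simp [diffList]
    | succ i =>
      have hi' : i < xs.length := by simpa using hi
      have hrec := ih x hp2 i hi'
      simp only [diffList, List.take_succ_cons, List.sum_cons, hrec, List.getD_cons_succ]
      have hmem : xs.getD i 0 ∈ xs := by
        rw [List.getD_eq_getElem xs 0 hi']
        exact List.getElem_mem _
      have hxle : x ≤ xs.getD i 0 := le_of_lt ((List.pairwise_cons.mp hp2).1 _ hmem)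
      omega

/-- A composition of `n` with a prescribed partial-sum set. -/
theorem exists_comp_compS (n : ℕ) (S : Finset ℕ) (hS : S ⊆ Finset.Ioo 0 n) :
    ∃ c : Composition n, compS c = S := by
  rcases Nat.eq_zero_or_pos n with rfl | hn
  · have hSe : S = ∅ := by
      rw [Finset.eq_empty_iff_forall_notMem]
      intro x hx
      have := hS hx
      simp at this
    refine ⟨⟨[], by simp, by simp⟩, ?_⟩
    rw [hSe, compS]
    simp [Composition.length]
  · set L := S.sort (· ≤ ·) with hL
    have hsorted : List.Pairwise (· < ·) L := (Finset.sortedLT_sort S).pairwise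
    have hmemL : ∀ x, x ∈ L ↔ x ∈ S := fun x => Finset.mem_sort _
    have hLpos : ∀ x ∈ L, 0 < x := by
      intro x hx
      have := hS ((hmemL x).mp hx)
      exact (Finset.mem_Ioo.mp this).1
    have hLlt : ∀ x ∈ L, x < n := by
      intro x hx
      have := hS ((hmemL x).mp hx)
      exact (Finset.mem_Ioo.mp this).2
    have hp : (0 :: L).Pairwise (· < ·) := by
      rw [List.pairwise_cons]
      exact ⟨hLpos, hsorted⟩
    have hpos' : ∀ {x : ℕ}, x ∈ diffList n L 0 → 0 < x :=
      fun {x} hx => diffList_pos n L 0 hp hLlt hn x hx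
    have hsum' : (diffList n L 0).sum = n := by
      rw [diffList_sum n L 0 hp hLlt (le_of_lt hn)]; omega
    refine ⟨⟨diffList n L 0, hpos', hsum'⟩, ?_⟩
    set c : Composition n := ⟨diffList n L 0, hpos', hsum'⟩ with hc
    have hblocks : c.blocks = diffList n L 0 := rfl
    have hlen : c.length = L.length + 1 := diffList_length n L 0
    ext x
    rw [compS, Finset.mem_image]
    constructor
    · rintro ⟨i, hi, rfl⟩
      rw [Finset.mem_range, hlen] at hi
      have hi' : i < L.length := by omega
      have hsz : c.sizeUpTo (i+1) = L.getD i 0 := by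
        rw [Composition.sizeUpTo, hblocks, diffList_take n L 0 hp i hi']
        omega
      rw [hsz]
      apply (hmemL _).mp
      rw [List.getD_eq_getElem L 0 hi']
      exact List.getElem_mem _
    · intro hx
      have hxL : x ∈ L := (hmemL x).mpr hx
      obtain ⟨i, hi, hgi⟩ := List.mem_iff_getElem.mp hxL
      refine ⟨i, ?_, ?_⟩
      · rw [Finset.mem_range, hlen]; omega
      · rw [Composition.sizeUpTo, hblocks, diffList_take n L 0 hp i hi,
          List.getD_eq_getElem L 0 hi, hgi]
        omega


/-! ### the bar involution and supp transfer -/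

theorem linext_injective [PartialOrder α] {n : ℕ} (ω : α ≃ Fin n) {w : Fin n → Fin n}
    (hw : w ∈ Linext ω) : Function.Injective w := by
  obtain ⟨e, he, rfl⟩ := hw
  intro i j hij
  exact e.injective (ω.injective hij)

theorem des_subset {n : ℕ} (w : Fin n → Fin n) : Des w ⊆ Finset.Ioo 0 n :=
  Finset.filter_subset _ _

theorem des_rev {n : ℕ} (w : Fin n → Fin n) (hw : Function.Injective w) :
    Des (fun i => Fin.rev (w i)) = Finset.Ioo 0 n \ Des w := by
  ext i
  rw [Des, Des, Finset.mem_sdiff, Finset.mem_filter, Finset.mem_filter]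
  constructor
  · rintro ⟨hIoo, hi, hlt⟩
    refine ⟨hIoo, ?_⟩
    rintro ⟨-, hi', hlt'⟩
    rw [Fin.rev_lt_rev] at hlt
    exact absurd hlt' (not_lt_of_gt hlt)
  · rintro ⟨hIoo, hnot⟩
    have h0n := Finset.mem_Ioo.mp hIoo
    refine ⟨hIoo, h0n.2, ?_⟩
    rw [Fin.rev_lt_rev]
    have hne : w ⟨i - 1, by omega⟩ ≠ w ⟨i, h0n.2⟩ := by
      intro hcon
      have := hw hcon
      rw [Fin.mk.injEq] at this
      omega
    have hnlt : ¬ w ⟨i, h0n.2⟩ < w ⟨i - 1, by omega⟩ := by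
      intro hcon
      exact hnot ⟨hIoo, h0n.2, hcon⟩
    exact lt_of_le_of_ne (not_lt.mp hnlt) hne

theorem linext_bar_iff [PartialOrder α] {n : ℕ} (ω : α ≃ Fin n) (w : Fin n → Fin n) :
    w ∈ Linext (barLabel ω) ↔ ∃ w₀ ∈ Linext ω, w = fun i => Fin.rev (w₀ i) := by
  constructor
  · rintro ⟨e, he, rfl⟩
    exact ⟨fun i => ω (e i), ⟨e, he, rfl⟩, rfl⟩
  · rintro ⟨w₀, ⟨e, he, rfl⟩, rfl⟩
    exact ⟨e, he, rfl⟩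

theorem suppF_bar_mono {β : Type*} [PartialOrder α] [PartialOrder β] {n : ℕ}
    (ω : α ≃ Fin n) (τ : β ≃ Fin n) (h : suppF ω ⊆ suppF τ) :
    suppF (barLabel ω) ⊆ suppF (barLabel τ) := by
  intro c hc
  obtain ⟨w, hw, hcS⟩ := hc
  rw [linext_bar_iff] at hw
  obtain ⟨w₀, hw₀, rfl⟩ := hw
  obtain ⟨c', hc'⟩ := exists_comp_compS n (Des w₀) (des_subset w₀)
  obtain ⟨w₁, hw₁, hc₁⟩ := h ⟨w₀, hw₀, hc'⟩
  refine ⟨fun i => Fin.rev (w₁ i), (linext_bar_iff τ _).mpr ⟨w₁, hw₁, rfl⟩, ?_⟩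
  rw [des_rev w₁ (linext_injective τ hw₁), ← hc₁, hc', hcS,
    des_rev w₀ (linext_injective ω hw₀)]

theorem weak_eq_strict_bar [PartialOrder α] {n : ℕ} (χ : α ≃ Fin n) (l : List α) :
    weakCountUp (fun p => ((χ p : ℕ))) l =
      strictCountUp (fun p => ((barLabel χ p : ℕ))) l := by
  rw [weakCountUp, strictCountUp]
  congr 1
  funext p
  rw [decide_eq_decide]
  have hbar : ∀ x : α, barLabel χ x = Fin.rev (χ x) := fun x => rfl
  rw [hbar, hbar, ← Fin.lt_def, ← Fin.lt_def, Fin.rev_lt_rev, Fin.lt_def]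

/-! ### the main strict-edge comparison -/

theorem main_strict {β : Type*} [PartialOrder α] [PartialOrder β] [Fintype α] [Fintype β]
    {n : ℕ} (ω : α ≃ Fin n) (τ : β ≃ Fin n) (h : suppF ω ⊆ suppF τ) :
    sSup {k | ∃ l : List β, IsMaxChainList l ∧
        strictCountUp (fun p => ((τ p : ℕ))) l = k} ≤
      sSup {k | ∃ l : List α, IsMaxChainList l ∧
        strictCountUp (fun p => ((ω p : ℕ))) l = k} := by
  apply csSup_le'
  rintro k ⟨lq, hlq, rfl⟩
  obtain ⟨w, hw, hcard⟩ := exists_good_linext ω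
  obtain ⟨c, hc⟩ := exists_comp_compS n (Des w) (des_subset w)
  obtain ⟨w', hw', hc'⟩ := h ⟨w, hw, hc⟩
  have h1 : strictCountUp (fun p => ((τ p : ℕ))) lq ≤ (Des w').card :=
    chain_count_le_des τ w' hw' lq hlq.2.1 hlq.1
  have h2 : (Des w').card = (Des w).card := by rw [← hc', hc]
  have hα : Nonempty α := by
    have hβ : Nonempty β := by
      cases lq with
      | nil => exact absurd rfl hlq.1
      | cons a t => exact ⟨a⟩
    obtain ⟨b⟩ := hβ
    exact ⟨ω.symm (τ b)⟩
  obtain ⟨lp, hlp, hcp⟩ := exists_maxChain_maxJ ω hα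
  have h3 : maxJω ω ≤ sSup {k | ∃ l : List α, IsMaxChainList l ∧
      strictCountUp (fun p => ((ω p : ℕ))) l = k} := by
    apply le_csSup
    · refine ⟨Fintype.card α, ?_⟩
      rintro k' ⟨l, hl, rfl⟩
      exact strictCountUp_le_card _ hl.2.1
    · exact ⟨lp, hlp, hcp⟩
  omega

end Stmt9Aux



/-- under `F`-support containment, the maximum number of strict
(resp. weak) edges in a maximal chain of `(P,ω)` is at least that of `(Q,τ)`. -/
theorem stmt_9 {α β : Type*} [PartialOrder α] [PartialOrder β] [Fintype α] [Fintype β]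
    {n : ℕ} (ω : α ≃ Fin n) (τ : β ≃ Fin n) (h : suppF ω ⊆ suppF τ) :
    (sSup {k | ∃ l : List β, IsMaxChainList l ∧
          strictCountUp (fun p => ((τ p : ℕ))) l = k} ≤
        sSup {k | ∃ l : List α, IsMaxChainList l ∧
          strictCountUp (fun p => ((ω p : ℕ))) l = k}) ∧
    sSup {k | ∃ l : List β, IsMaxChainList l ∧
        weakCountUp (fun p => ((τ p : ℕ))) l = k} ≤
      sSup {k | ∃ l : List α, IsMaxChainList l ∧
        weakCountUp (fun p => ((ω p : ℕ))) l = k} := by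
  refine ⟨Stmt9Aux.main_strict ω τ h, ?_⟩
  have h2 := Stmt9Aux.main_strict (barLabel ω) (barLabel τ) (Stmt9Aux.suppF_bar_mono ω τ h)
  have hsβ : {k | ∃ l : List β, IsMaxChainList l ∧
        weakCountUp (fun p => ((τ p : ℕ))) l = k}
      = {k | ∃ l : List β, IsMaxChainList l ∧
        strictCountUp (fun p => ((barLabel τ p : ℕ))) l = k} := by
    ext k
    exact exists_congr fun l => and_congr_right fun _ => by
      rw [Stmt9Aux.weak_eq_strict_bar]
  have hsα : {k | ∃ l : List α, IsMaxChainList l ∧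
        weakCountUp (fun p => ((ω p : ℕ))) l = k}
      = {k | ∃ l : List α, IsMaxChainList l ∧
        strictCountUp (fun p => ((barLabel ω p : ℕ))) l = k} := by
    ext k
    exact exists_congr fun l => and_congr_right fun _ => by
      rw [Stmt9Aux.weak_eq_strict_bar]
  rw [hsβ, hsα]
  exact h2
end

section
/- Suppose labeled posets (P,ω) and (Q,τ) satisfy supp_M(P,ω) ⊆ supp_M(Q,τ). Then for every i ≥ 1, the maximum cardinality of a union of i weak convex subposets of (P,ω) is less than or equal to the maximum cardinality of a union of i weak convex subposets of (Q,τ). -/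
open scoped BigOperators

section AuxStmt10

set_option linter.unusedSectionVars false

open Classical

section Aux

variable {α : Type*} [PartialOrder α] [Fintype α]

/-- "Strict separation": there is a strict cover `a ⋖ b` with `v ≤ a` and `b ≤ u`. -/
def SCrel (w : α → ℕ) (v u : α) : Prop :=
  ∃ a b : α, a ⋖ b ∧ w b < w a ∧ v ≤ a ∧ b ≤ u

lemma SCrel.lt {w : α → ℕ} {v u : α} (h : SCrel w v u) : v < u := by
  obtain ⟨a, b, hab, _, hva, hbu⟩ := h
  exact lt_of_le_of_lt hva (lt_of_lt_of_le hab.lt hbu)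

lemma SCrel.trans' {w : α → ℕ} {v u z : α} (h : SCrel w v u) (huz : u ≤ z) : SCrel w v z := by
  obtain ⟨a, b, hab, hw, hva, hbu⟩ := h
  exact ⟨a, b, hab, hw, hva, hbu.trans huz⟩

lemma SCrel.transitive (w : α → ℕ) : Transitive (SCrel w) :=
  fun _ _ _ h1 h2 => h1.trans' h2.lt.le

/-- A weak convex set admits no strict separation between two of its members. -/
lemma SCrel.not_of_weakConvex {w : α → ℕ} {T : Set α} (hT : IsWeakConvex w T)
    {v u : α} (hv : v ∈ T) (hu : u ∈ T) (h : SCrel w v u) : False := by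
  obtain ⟨a, b, hab, hw, hva, hbu⟩ := h
  have hau : a < u := lt_of_lt_of_le hab.lt hbu
  have hvb : v < b := lt_of_le_of_lt hva hab.lt
  have ha : a ∈ T := by
    rcases eq_or_lt_of_le hva with rfl | hva'
    · exact hv
    · exact hT.1 hva' hau hv hu
  have hb : b ∈ T := by
    rcases eq_or_lt_of_le hbu with rfl | hbu'
    · exact hu
    · exact hT.1 hvb hbu' hv hu
  exact absurd (hT.2 a ha b hb hab) (not_lt.mpr hw.le)

end Aux

section Greedy

variable {α : Type*} [PartialOrder α] [Fintype α]

/-- minimal element of `R` below `x`. -/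
lemma exists_min_below {R : Finset α} {x : α} (hx : x ∈ R) :
    ∃ m ∈ R, m ≤ x ∧ ∀ y ∈ R, y ≤ m → y = m := by
  obtain ⟨m, hm, hmin⟩ := (Finset.exists_minimal (s := R.filter (· ≤ x))
    ⟨x, Finset.mem_filter.mpr ⟨hx, le_rfl⟩⟩).imp fun m hm => (⟨hm.1, fun y hy => hm.not_lt hy⟩ : m ∈ _ ∧ ∀ y ∈ _, ¬ y < m)
  rw [Finset.mem_filter] at hm
  refine ⟨m, hm.1, hm.2, fun y hy hym => ?_⟩
  by_contra hne
  exact hmin y (Finset.mem_filter.mpr ⟨hy, hym.trans hm.2⟩) (lt_of_le_of_ne hym hne)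

lemma exists_covBy_between {p q : α} (h : p < q) : ∃ c, p ⋖ c ∧ c ≤ q := by
  obtain ⟨m, hm, hmin⟩ := (Finset.exists_minimal
    (s := Finset.univ.filter (fun z => p < z ∧ z ≤ q)) ⟨q, by simp [h]⟩).imp fun m hm => (⟨hm.1, fun y hy => hm.not_lt hy⟩ : m ∈ _ ∧ ∀ y ∈ _, ¬ y < m)
  rw [Finset.mem_filter] at hm
  refine ⟨m, ⟨hm.2.1, fun z hz hzm => ?_⟩, hm.2.2⟩
  exact hmin z (Finset.mem_filter.mpr ⟨Finset.mem_univ _, hz, hzm.le.trans hm.2.2⟩) hzm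

open Classical in
/-- the maximal weak-convex ideal of `R` (for `R` an up-set). -/
noncomputable def Lst (w : α → ℕ) (R : Finset α) : Finset α :=
  R.filter (fun x => ∀ a b : α, a ∈ R → a ⋖ b → b ≤ x → w a < w b)

lemma mem_Lst {w : α → ℕ} {R : Finset α} {x : α} :
    x ∈ Lst w R ↔ x ∈ R ∧ ∀ a b : α, a ∈ R → a ⋖ b → b ≤ x → w a < w b := by
  simp [Lst]

lemma Lst_subset {w : α → ℕ} {R : Finset α} : Lst w R ⊆ R := Finset.filter_subset _ _

lemma Lst_downclosed {w : α → ℕ} {R : Finset α} {x y : α} (hx : x ∈ R)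
    (hy : y ∈ Lst w R) (hxy : x ≤ y) : x ∈ Lst w R := by
  rw [mem_Lst] at hy ⊢
  exact ⟨hx, fun a b ha hab hbx => hy.2 a b ha hab (hbx.trans hxy)⟩

lemma min_mem_Lst {w : α → ℕ} {R : Finset α} {m : α} (hm : m ∈ R)
    (hmin : ∀ y ∈ R, y ≤ m → y = m) : m ∈ Lst w R := by
  rw [mem_Lst]
  refine ⟨hm, fun a b ha hab hbm => ?_⟩
  have : a = m := hmin a ha ((hab.lt.le.trans hbm))
  subst this
  exact absurd (hab.lt.trans_le hbm) (lt_irrefl a)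

lemma Lst_nonempty {w : α → ℕ} {R : Finset α} (hR : R.Nonempty) : (Lst w R).Nonempty := by
  obtain ⟨x, hx⟩ := hR
  obtain ⟨m, hm, _, hmin⟩ := exists_min_below hx
  exact ⟨m, min_mem_Lst hm hmin⟩

/-- Monotonicity of labels inside `Lst`. -/
lemma Lst_mono {w : α → ℕ} {R : Finset α} (hup : ∀ {x y : α}, x ∈ R → x ≤ y → y ∈ R)
    {p q : α} (hp : p ∈ Lst w R) (hq : q ∈ Lst w R) (hpq : p < q) : w p < w q := by
  have H : ∀ p : α, p ∈ Lst w R → p < q → w p < w q := by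
    have hwf : WellFoundedGT α := inferInstance
    intro p
    induction p using hwf.wf.induction with
    | _ p IH =>
      intro hp hpq
      obtain ⟨c, hpc, hcq⟩ := exists_covBy_between hpq
      have hwc : w p < w c := (mem_Lst.mp hq).2 p c (Lst_subset hp) hpc hcq
      rcases eq_or_lt_of_le hcq with rfl | hcq'
      · exact hwc
      · have hc : c ∈ Lst w R :=
          Lst_downclosed (hup (Lst_subset hp) hpc.lt.le) hq hcq'.le
        exact hwc.trans (IH c hpc.lt hc hcq')
  exact H p hp hpq

end Greedy

section GreedyDef

variable {α : Type*} [PartialOrder α] [Fintype α]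

open Classical in
noncomputable def greedy (w : α → ℕ) (U : Set α) (R : Finset α) : List (Finset α) :=
  if hR : R.Nonempty then
    if hx : ∃ x ∈ R, x ∉ U ∧ ∀ y ∈ R, y ≤ x → y = x then
      {hx.choose} :: greedy w U (R.erase hx.choose)
    else
      Lst w R :: greedy w U (R \ Lst w R)
  else []
termination_by R.card
decreasing_by
  · exact Finset.card_erase_lt_of_mem hx.choose_spec.1
  · exact Finset.card_lt_card (Finset.sdiff_ssubset Lst_subset (Lst_nonempty hR))

end GreedyDef

section GreedyLemmas

variable {α : Type*} [PartialOrder α] [Fintype α] {w : α → ℕ} {U : Set α}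

lemma greedy_subset : ∀ R : Finset α, ∀ A ∈ greedy w U R, A ⊆ R ∧ A.Nonempty := by
  intro R
  induction R using greedy.induct (w := w) (U := U) with
  | case1 R hR hx IH =>
    rw [greedy, dif_pos hR, dif_pos hx]
    intro A hA
    rcases List.mem_cons.mp hA with rfl | hA
    · exact ⟨Finset.singleton_subset_iff.mpr hx.choose_spec.1, Finset.singleton_nonempty _⟩
    · obtain ⟨h1, h2⟩ := IH A hA
      exact ⟨h1.trans (Finset.erase_subset _ _), h2⟩
  | case2 R hR hx IH =>
    rw [greedy, dif_pos hR, dif_neg hx]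
    intro A hA
    rcases List.mem_cons.mp hA with rfl | hA
    · exact ⟨Lst_subset, Lst_nonempty hR⟩
    · obtain ⟨h1, h2⟩ := IH A hA
      exact ⟨h1.trans (Finset.sdiff_subset), h2⟩
  | case3 R hR =>
    rw [greedy, dif_neg hR]
    intro A hA
    exact absurd hA List.not_mem_nil

end GreedyLemmas

section GreedyLemmas2

variable {α : Type*} [PartialOrder α] [Fintype α] {w : α → ℕ} {U : Set α}

def UpClosed (R : Finset α) : Prop := ∀ x y : α, x ∈ R → x ≤ y → y ∈ R

lemma upClosed_erase {R : Finset α} {x : α} (hup : UpClosed R)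
    (hmin : ∀ y ∈ R, y ≤ x → y = x) : UpClosed (R.erase x) := by
  intro a b ha hab
  have haR := Finset.mem_of_mem_erase ha
  refine Finset.mem_erase.mpr ⟨?_, hup a b haR hab⟩
  rintro rfl
  exact (Finset.mem_erase.mp ha).1 (hmin a haR hab)

lemma upClosed_sdiff {R : Finset α} (hup : UpClosed R) : UpClosed (R \ Lst w R) := by
  intro a b ha hab
  rw [Finset.mem_sdiff] at ha ⊢
  refine ⟨hup a b ha.1 hab, fun hb => ha.2 (Lst_downclosed ha.1 hb hab)⟩

lemma greedy_mem_exists : ∀ R : Finset α, ∀ p ∈ R,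
    ∃ k : ℕ, ∃ hk : k < (greedy w U R).length, p ∈ (greedy w U R)[k] := by
  intro R
  induction R using greedy.induct (w := w) (U := U) with
  | case1 R hR hx IH =>
    rw [greedy, dif_pos hR, dif_pos hx]
    intro p hp
    by_cases hpx : p = hx.choose
    · exact ⟨0, by simp, by simp [hpx]⟩
    · obtain ⟨k, hk, hmem⟩ := IH p (Finset.mem_erase.mpr ⟨hpx, hp⟩)
      exact ⟨k + 1, by simpa using Nat.succ_lt_succ hk, by simpa using hmem⟩
  | case2 R hR hx IH =>
    rw [greedy, dif_pos hR, dif_neg hx]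
    intro p hp
    by_cases hpl : p ∈ Lst w R
    · exact ⟨0, by simp, by simpa using hpl⟩
    · obtain ⟨k, hk, hmem⟩ := IH p (Finset.mem_sdiff.mpr ⟨hp, hpl⟩)
      exact ⟨k + 1, by simpa using Nat.succ_lt_succ hk, by simpa using hmem⟩
  | case3 R hR =>
    intro p hp
    exact absurd hp (by simpa [Finset.not_nonempty_iff_eq_empty.mp hR] using Finset.not_mem_empty p)

lemma greedy_mem_unique : ∀ R : Finset α, ∀ p : α, ∀ s t : ℕ,
    ∀ hs : s < (greedy w U R).length, ∀ ht : t < (greedy w U R).length,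
    p ∈ (greedy w U R)[s] → p ∈ (greedy w U R)[t] → s = t := by
  intro R
  induction R using greedy.induct (w := w) (U := U) with
  | case1 R hR hx IH =>
    rw [greedy, dif_pos hR, dif_pos hx]
    intro p s t hs ht hps hpt
    match s, t with
    | 0, 0 => rfl
    | 0, t + 1 =>
      exfalso
      simp only [List.getElem_cons_zero, Finset.mem_singleton] at hps
      have := (greedy_subset _ _ (List.getElem_mem (l := greedy w U (R.erase hx.choose))
        (by simpa using ht))).1 (by simpa using hpt)
      exact (Finset.mem_erase.mp this).1 hps
    | s + 1, 0 =>
      exfalso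
      simp only [List.getElem_cons_zero, Finset.mem_singleton] at hpt
      have := (greedy_subset _ _ (List.getElem_mem (l := greedy w U (R.erase hx.choose))
        (by simpa using hs))).1 (by simpa using hps)
      exact (Finset.mem_erase.mp this).1 hpt
    | s + 1, t + 1 =>
      have := IH p s t (by simpa using hs) (by simpa using ht)
        (by simpa using hps) (by simpa using hpt)
      omega
  | case2 R hR hx IH =>
    rw [greedy, dif_pos hR, dif_neg hx]
    intro p s t hs ht hps hpt
    match s, t with
    | 0, 0 => rfl
    | 0, t + 1 =>
      exfalso
      simp only [List.getElem_cons_zero] at hps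
      have := (greedy_subset _ _ (List.getElem_mem (l := greedy w U (R \ Lst w R))
        (by simpa using ht))).1 (by simpa using hpt)
      exact (Finset.mem_sdiff.mp this).2 hps
    | s + 1, 0 =>
      exfalso
      simp only [List.getElem_cons_zero] at hpt
      have := (greedy_subset _ _ (List.getElem_mem (l := greedy w U (R \ Lst w R))
        (by simpa using hs))).1 (by simpa using hps)
      exact (Finset.mem_sdiff.mp this).2 hpt
    | s + 1, t + 1 =>
      have := IH p s t (by simpa using hs) (by simpa using ht)
        (by simpa using hps) (by simpa using hpt)
      omega
  | case3 R hR =>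
    rw [greedy, dif_neg hR]
    intro p s t hs
    exact absurd hs (by simp)

end GreedyLemmas2

section GreedyLemmas3

variable {α : Type*} [PartialOrder α] [Fintype α] {w : α → ℕ} {U : Set α}

/-- layers are emitted respecting the order. -/
lemma greedy_order : ∀ R : Finset α, UpClosed R → ∀ p q : α, ∀ s t : ℕ,
    ∀ hs : s < (greedy w U R).length, ∀ ht : t < (greedy w U R).length,
    p ∈ (greedy w U R)[s] → q ∈ (greedy w U R)[t] → p < q → s ≤ t := by
  intro R
  induction R using greedy.induct (w := w) (U := U) with
  | case1 R hR hx IH =>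
    rw [greedy, dif_pos hR, dif_pos hx]
    intro hup p q s t hs ht hps hqt hpq
    match s, t with
    | 0, t => exact Nat.zero_le t
    | s + 1, 0 =>
      exfalso
      simp only [List.getElem_cons_zero, Finset.mem_singleton] at hqt
      have hpR : p ∈ R.erase hx.choose := (greedy_subset _ _ (List.getElem_mem
        (l := greedy w U (R.erase hx.choose)) (by simpa using hs))).1 (by simpa using hps)
      have := hx.choose_spec.2.2 p (Finset.mem_of_mem_erase hpR) (hqt ▸ hpq.le)
      exact (Finset.mem_erase.mp hpR).1 this
    | s + 1, t + 1 =>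
      have := IH (upClosed_erase hup hx.choose_spec.2.2) p q s t (by simpa using hs)
        (by simpa using ht) (by simpa using hps) (by simpa using hqt) hpq
      omega
  | case2 R hR hx IH =>
    rw [greedy, dif_pos hR, dif_neg hx]
    intro hup p q s t hs ht hps hqt hpq
    match s, t with
    | 0, t => exact Nat.zero_le t
    | s + 1, 0 =>
      exfalso
      simp only [List.getElem_cons_zero] at hqt
      have hpR : p ∈ R \ Lst w R := (greedy_subset _ _ (List.getElem_mem
        (l := greedy w U (R \ Lst w R)) (by simpa using hs))).1 (by simpa using hps)
      rw [Finset.mem_sdiff] at hpR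
      exact hpR.2 (Lst_downclosed hpR.1 hqt hpq.le)
    | s + 1, t + 1 =>
      have := IH (upClosed_sdiff hup) p q s t (by simpa using hs)
        (by simpa using ht) (by simpa using hps) (by simpa using hqt) hpq
      omega
  | case3 R hR =>
    rw [greedy, dif_neg hR]
    intro hup p q s t hs
    exact absurd hs (by simp)

/-- labels increase within a layer. -/
lemma greedy_layer_mono : ∀ R : Finset α, UpClosed R → ∀ p q : α, ∀ k : ℕ,
    ∀ hk : k < (greedy w U R).length,
    p ∈ (greedy w U R)[k] → q ∈ (greedy w U R)[k] → p < q → w p < w q := by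
  intro R
  induction R using greedy.induct (w := w) (U := U) with
  | case1 R hR hx IH =>
    rw [greedy, dif_pos hR, dif_pos hx]
    intro hup p q k hk hpk hqk hpq
    match k with
    | 0 =>
      simp only [List.getElem_cons_zero, Finset.mem_singleton] at hpk hqk
      exact absurd (hpk.trans hqk.symm ▸ hpq) (lt_irrefl _)
    | k + 1 =>
      exact IH (upClosed_erase hup hx.choose_spec.2.2) p q k (by simpa using hk)
        (by simpa using hpk) (by simpa using hqk) hpq
  | case2 R hR hx IH =>
    rw [greedy, dif_pos hR, dif_neg hx]
    intro hup p q k hk hpk hqk hpq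
    match k with
    | 0 =>
      simp only [List.getElem_cons_zero] at hpk hqk
      exact Lst_mono (fun ha hab => hup _ _ ha hab) hpk hqk hpq
    | k + 1 =>
      exact IH (upClosed_sdiff hup) p q k (by simpa using hk)
        (by simpa using hpk) (by simpa using hqk) hpq
  | case3 R hR =>
    rw [greedy, dif_neg hR]
    intro hup p q k hk
    exact absurd hk (by simp)

/-- total size. -/
lemma greedy_sum_card : ∀ R : Finset α,
    (((greedy w U R).map Finset.card).sum) = R.card := by
  intro R
  induction R using greedy.induct (w := w) (U := U) with
  | case1 R hR hx IH =>
    rw [greedy, dif_pos hR, dif_pos hx]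
    simp only [List.map_cons, List.sum_cons, IH, Finset.card_singleton]
    rw [Finset.card_erase_of_mem hx.choose_spec.1]
    have := Finset.card_pos.mpr hR
    omega
  | case2 R hR hx IH =>
    rw [greedy, dif_pos hR, dif_neg hx]
    simp only [List.map_cons, List.sum_cons, IH]
    rw [Finset.card_sdiff_of_subset Lst_subset]
    have := Finset.card_le_card (Lst_subset (w := w) (R := R))
    omega
  | case3 R hR =>
    rw [greedy, dif_neg hR]
    simp [Finset.not_nonempty_iff_eq_empty.mp hR]

end GreedyLemmas3

section KeyLemmas

variable {α : Type*} [PartialOrder α] [Fintype α] {w : α → ℕ} {U : Set α}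

open Classical in
noncomputable def touchB (U : Set α) (A : Finset α) : Bool := decide (∃ p ∈ A, p ∈ U)

lemma touchB_iff {A : Finset α} : touchB U A = true ↔ ∃ p ∈ A, p ∈ U := by
  simp [touchB]

lemma key_step {R : Finset α} (hup : UpClosed R) (hw : Function.Injective w)
    (hminU : ∀ m ∈ R, (∀ y ∈ R, y ≤ m → y = m) → m ∈ U)
    {u : α} (hu : u ∈ R) (hnot : u ∉ Lst w R) :
    ∃ v, v ∈ U ∧ v ∈ R ∧ SCrel w v u := by
  rw [mem_Lst] at hnot
  push_neg at hnot
  obtain ⟨a, b, ha, hab, hbu, hnlt⟩ := hnot hu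
  have hba : w b < w a := by
    rcases lt_or_eq_of_le hnlt with h | h
    · exact h
    · exact absurd (hw h) hab.lt.ne'
  obtain ⟨m, hmR, hma, hmin⟩ := exists_min_below ha
  exact ⟨m, hminU m hmR hmin, hmR, a, b, hab, hba, hma, hbu⟩

lemma greedy_vs (hw : Function.Injective w) : ∀ R : Finset α, UpClosed R →
    ∃ vs : List α, vs.length = (greedy w U R).countP (touchB U) ∧
      vs.Chain' (SCrel w) ∧ ∀ v ∈ vs, v ∈ U ∧ v ∈ R := by
  intro R
  induction R using greedy.induct (w := w) (U := U) with
  | case1 R hR hx IH =>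
    intro hup
    obtain ⟨vs, hlen, hch, hmem⟩ := IH (upClosed_erase hup hx.choose_spec.2.2)
    refine ⟨vs, ?_, hch, fun v hv => ⟨(hmem v hv).1,
      Finset.mem_of_mem_erase (hmem v hv).2⟩⟩
    rw [greedy, dif_pos hR, dif_pos hx, List.countP_cons]
    have : touchB U ({hx.choose} : Finset α) = false := by
      rw [Bool.eq_false_iff]
      intro hc
      obtain ⟨p, hp, hpU⟩ := touchB_iff.mp hc
      rw [Finset.mem_singleton] at hp
      exact hx.choose_spec.2.1 (hp ▸ hpU)
    rw [this]
    simpa using hlen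
  | case2 R hR hx IH =>
    intro hup
    push_neg at hx
    have hminU : ∀ m ∈ R, (∀ y ∈ R, y ≤ m → y = m) → m ∈ U := by
      intro m hm hmin
      by_contra hmU
      obtain ⟨y, hy, hym, hne⟩ := hx m hm hmU
      exact hne (hmin y hy hym)
    obtain ⟨x, hxR⟩ := id hR
    obtain ⟨m, hmR, _, hmmin⟩ := exists_min_below hxR
    have hmU : m ∈ U := hminU m hmR hmmin
    have htouch : touchB U (Lst w R) = true :=
      touchB_iff.mpr ⟨m, min_mem_Lst hmR hmmin, hmU⟩
    obtain ⟨vs, hlen, hch, hmem⟩ := IH (upClosed_sdiff hup)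
    rw [greedy, dif_pos hR, dif_neg (by push_neg; exact hx), List.countP_cons, htouch]
    match vs, hlen, hch, hmem with
    | [], hlen, _, _ =>
      exact ⟨[m], by simp [← hlen], List.isChain_singleton m, by
        intro v hv; rw [List.mem_singleton] at hv; exact hv ▸ ⟨hmU, hmR⟩⟩
    | v1 :: rest, hlen, hch, hmem =>
      have hv1 : v1 ∈ R \ Lst w R := (hmem v1 List.mem_cons_self).2
      rw [Finset.mem_sdiff] at hv1
      obtain ⟨v0, hv0U, hv0R, hsc⟩ := key_step hup hw hminU hv1.1 hv1.2
      refine ⟨v0 :: v1 :: rest, by simp [← hlen], List.isChain_cons_cons.mpr ⟨hsc, hch⟩, ?_⟩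
      intro v hv
      rcases List.mem_cons.mp hv with rfl | hv
      · exact ⟨hv0U, hv0R⟩
      · have := hmem v hv
        exact ⟨this.1, Finset.mem_sdiff.mp this.2 |>.1⟩
  | case3 R hR =>
    intro hup
    exact ⟨[], by rw [greedy, dif_neg hR]; simp, List.isChain_nil, by simp⟩

end KeyLemmas

section Counting

lemma countP_eq_card_filter_range {X : Type*} (l : List X) (p : X → Bool) (d : X) :
    ((Finset.range l.length).filter (fun k => p (l.getD k d) = true)).card = l.countP p := by
  induction l with
  | nil => simp
  | cons a t IH =>
    rw [List.countP_cons, ← IH, List.length_cons]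
    rw [Finset.card_filter, Finset.card_filter, Finset.sum_range_succ']
    simp only [List.getD_cons_succ, List.getD_cons_zero]

variable {α : Type*} [PartialOrder α] [Fintype α] {w : α → ℕ}

lemma length_le_of_chain {i : ℕ} {T : Fin i → Set α} (hT : ∀ j, IsWeakConvex w (T j))
    {vs : List α} (hch : vs.Chain' (SCrel w)) (hmem : ∀ v ∈ vs, v ∈ ⋃ j, T j) :
    vs.length ≤ i := by
  haveI : IsTrans α (SCrel w) := ⟨fun a b c hab hbc => SCrel.transitive w hab hbc⟩
  have hpw : vs.Pairwise (SCrel w) := List.isChain_iff_pairwise.mp hch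
  have hget : ∀ k : Fin vs.length, ∃ j : Fin i, vs.get k ∈ T j := fun k =>
    Set.mem_iUnion.mp (hmem _ (List.get_mem vs k))
  classical
  let J : Fin vs.length → Fin i := fun k => (hget k).choose
  have hJ : Function.Injective J := by
    intro k k' hkk'
    by_contra hne
    have hsc : ∀ a b : Fin vs.length, a < b → SCrel w (vs.get a) (vs.get b) :=
      fun a b hab => List.pairwise_iff_get.mp hpw a b hab
    have h1 : vs.get k ∈ T (J k) := (hget k).choose_spec
    have h2 : vs.get k' ∈ T (J k) := by
      show vs.get k' ∈ T ((hget k).choose)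
      rw [show (hget k).choose = (hget k').choose from hkk']
      exact (hget k').choose_spec
    rcases lt_or_gt_of_ne hne with h | h
    · exact SCrel.not_of_weakConvex (hT (J k)) h1 h2 (hsc k k' h)
    · exact SCrel.not_of_weakConvex (hT (J k)) h2 h1 (hsc k' k h)
  simpa using Fintype.card_le_of_injective J hJ

end Counting

section MainP

variable {α : Type*} [PartialOrder α] [Fintype α] {n : ℕ}

lemma main_P (ω : α ≃ Fin n) (i : ℕ) (T : Fin i → Set α)
    (hT : ∀ j, IsWeakConvex (fun p => ((ω p : ℕ))) (T j)) :
    ∃ c : Composition n, c ∈ suppM ω ∧ ∃ V : Finset ℕ, V.card ≤ i ∧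
      (∀ k ∈ V, k < c.length) ∧
      (⋃ j, T j).ncard ≤ ∑ k ∈ V, c.blocks.getD k 0 := by
  classical
  set w : α → ℕ := fun p => ((ω p : ℕ)) with hwdef
  have hw : Function.Injective w := by
    intro a b hab
    exact ω.injective (Fin.val_injective hab)
  set U : Set α := ⋃ j, T j with hUdef
  set l : List (Finset α) := greedy w U Finset.univ with hldef
  have hup : UpClosed (Finset.univ : Finset α) := fun x y _ _ => Finset.mem_univ y
  have hcard : Fintype.card α = n := by
    have := Fintype.card_congr ω
    simpa using this
  -- the composition
  have hpos : ∀ {j : ℕ}, j ∈ l.map Finset.card → 0 < j := by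
    intro j hj
    obtain ⟨A, hA, rfl⟩ := List.mem_map.mp hj
    exact Finset.card_pos.mpr (greedy_subset _ A hA).2
  have hsum : (l.map Finset.card).sum = n := by
    rw [hldef, greedy_sum_card, Finset.card_univ, hcard]
  set c : Composition n := ⟨l.map Finset.card, fun {j} => hpos, hsum⟩ with hcdef
  have hclen : c.length = l.length := by
    simp [hcdef, Composition.length]
  -- the index function
  have hex : ∀ p : α, ∃ k : ℕ, ∃ hk : k < l.length, p ∈ l[k] :=
    fun p => greedy_mem_exists Finset.univ p (Finset.mem_univ p)
  set idx : α → ℕ := fun p => (hex p).choose with hidxdef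
  have hidxlt : ∀ p, idx p < l.length := fun p => (hex p).choose_spec.choose
  have hidxmem : ∀ p, p ∈ l[idx p]'(hidxlt p) := fun p => (hex p).choose_spec.choose_spec
  have hidxuniq : ∀ p : α, ∀ k : ℕ, ∀ hk : k < l.length, p ∈ l[k] → idx p = k :=
    fun p k hk hpk => greedy_mem_unique Finset.univ p (idx p) k (hidxlt p) hk (hidxmem p) hpk
  set f : α → ℕ := fun p => idx p + 1 with hfdef
  have hmono : ∀ a b : α, a < b → idx a ≤ idx b := fun a b hab =>
    greedy_order Finset.univ hup a b (idx a) (idx b) (hidxlt a) (hidxlt b)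
      (hidxmem a) (hidxmem b) hab
  have hPP : IsPPart w f := by
    refine ⟨fun p => Nat.le_add_left 1 _, fun a b hab => by
      simpa [hfdef] using Nat.add_le_add_right (hmono a b hab) 1, ?_⟩
    intro a b hab hba
    have hle := hmono a b hab
    rcases lt_or_eq_of_le hle with h | h
    · simpa [hfdef] using Nat.add_lt_add_right h 1
    · exfalso
      have hbmem : b ∈ l[idx a]'(hidxlt a) := by
        have := hidxmem b
        simp_rw [h]
        convert this using 2
      have := greedy_layer_mono Finset.univ hup a b (idx a) (hidxlt a) (hidxmem a) hbmem hab
      omega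
  -- fibers
  have hfib : ∀ k : ℕ, ∀ hk : k < l.length, {p : α | f p = k + 1} = (l[k] : Finset α) := by
    intro k hk
    ext p
    simp only [Set.mem_setOf_eq, Finset.coe_mem, hfdef, Finset.mem_coe]
    constructor
    · intro h
      have : idx p = k := by omega
      subst this
      exact hidxmem p
    · intro h
      rw [hidxuniq p k hk h]
  refine ⟨c, ⟨f, hPP, ?_, ?_⟩, ?_⟩
  · intro p
    rw [hclen]
    exact Nat.succ_le_of_lt (hidxlt p)
  · intro j
    have hj : (j : ℕ) < l.length := by rw [← hclen]; exact j.2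
    rw [hfib j hj, Set.ncard_coe_finset]
    have : c.blocksFun j = (l.map Finset.card)[(j : ℕ)]'(by simpa using hj) := by
      simp [Composition.blocksFun, hcdef, List.get_eq_getElem]
    rw [this, List.getElem_map]
  · -- the selection V
    set V : Finset ℕ := (Finset.range l.length).filter
      (fun k => touchB U (l.getD k ∅) = true) with hVdef
    obtain ⟨vs, hvslen, hvsch, hvsmem⟩ := greedy_vs (U := U) hw Finset.univ hup
    have hVcard : V.card ≤ i := by
      rw [hVdef, countP_eq_card_filter_range l (touchB U) ∅, ← hvslen]
      exact length_le_of_chain hT hvsch (fun v hv => (hvsmem v hv).1)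
    refine ⟨V, hVcard, ?_, ?_⟩
    · intro k hk
      rw [hclen]
      exact Finset.mem_range.mp (Finset.mem_of_mem_filter k hk)
    · -- cardinality bound
      have hsub : U.toFinset ⊆ V.biUnion (fun k => l.getD k ∅) := by
        intro p hp
        rw [Set.mem_toFinset] at hp
        refine Finset.mem_biUnion.mpr ⟨idx p, ?_, ?_⟩
        · rw [hVdef, Finset.mem_filter, Finset.mem_range]
          refine ⟨hidxlt p, touchB_iff.mpr ⟨p, ?_, hp⟩⟩
          rw [List.getD_eq_getElem l ∅ (hidxlt p)]
          exact hidxmem p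
        · rw [List.getD_eq_getElem l ∅ (hidxlt p)]
          exact hidxmem p
      have h1 : U.ncard ≤ (V.biUnion (fun k => l.getD k ∅)).card := by
        rw [Set.ncard_eq_toFinset_card' U]
        exact Finset.card_le_card hsub
      refine h1.trans ((Finset.card_biUnion_le).trans (le_of_eq ?_))
      refine Finset.sum_congr rfl ?_
      intro k hk
      have hklt : k < l.length := Finset.mem_range.mp (Finset.mem_of_mem_filter k hk)
      rw [List.getD_eq_getElem l ∅ hklt]
      have : c.blocks.getD k 0 = (l.map Finset.card).getD k 0 := rfl
      rw [this, List.getD_eq_getElem _ 0 (by simpa using hklt), List.getElem_map]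

end MainP

section MainQ

variable {β : Type*} [PartialOrder β] [Fintype β] {n : ℕ}

lemma fiber_weakConvex {w : β → ℕ} (hw : Function.Injective w) {g : β → ℕ}
    (hg : IsPPart w g) (v : ℕ) : IsWeakConvex w {q : β | g q = v} := by
  constructor
  · intro x y z hxy hyz hx hz
    have h1 := hg.2.1 x y hxy
    have h2 := hg.2.1 y z hyz
    simp only [Set.mem_setOf_eq] at hx hz ⊢
    omega
  · intro a ha b hb hab
    simp only [Set.mem_setOf_eq] at ha hb
    by_contra hcon
    rcases lt_or_eq_of_le (not_lt.mp hcon) with h | h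
    · have := hg.2.2 a b hab.lt h
      omega
    · exact hab.lt.ne (hw h.symm)

lemma main_Q (τ : β ≃ Fin n) (i : ℕ) (c : Composition n) (hc : c ∈ suppM τ)
    (V : Finset ℕ) (hVcard : V.card ≤ i) (hVlt : ∀ k ∈ V, k < c.length)
    (hVne : V.Nonempty) :
    ∃ T' : Fin i → Set β, (∀ j, IsWeakConvex (fun p => ((τ p : ℕ))) (T' j)) ∧
      (⋃ j, T' j).ncard = ∑ k ∈ V, c.blocks.getD k 0 := by
  classical
  obtain ⟨g, hgPP, hgle, hgfib⟩ := hc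
  set w : β → ℕ := fun p => ((τ p : ℕ)) with hwdef
  have hw : Function.Injective w := fun a b hab => τ.injective (Fin.val_injective hab)
  set Fb : ℕ → Finset β := fun k => Finset.univ.filter (fun q => g q = k + 1) with hFbdef
  have hFbcard : ∀ k ∈ V, (Fb k).card = c.blocks.getD k 0 := by
    intro k hk
    have hklt : k < c.length := hVlt k hk
    have h1 := hgfib ⟨k, hklt⟩
    have h2 : {p : β | g p = k + 1} = (Fb k : Set β) := by
      ext q; simp [hFbdef]
    rw [h2, Set.ncard_coe_finset] at h1
    rw [h1]
    simp only [Composition.blocksFun, List.get_eq_getElem]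
    rw [List.getD_eq_getElem c.blocks 0 (by exact hklt)]
  -- surjection from Fin i onto V
  set r : ℕ := V.card with hrdef
  have hr1 : 1 ≤ r := Finset.card_pos.mpr hVne
  set vlist : List ℕ := V.toList with hvldef
  have hvlen : vlist.length = r := Finset.length_toList V
  set s : Fin i → ℕ := fun j => vlist.getD (min j (r - 1)) 0 with hsdef
  have hsV : ∀ j, s j ∈ V := by
    intro j
    have hlt : min (j : ℕ) (r - 1) < vlist.length := by
      rw [hvlen]; omega
    rw [hsdef]
    simp only
    rw [List.getD_eq_getElem vlist 0 hlt]
    rw [← Finset.mem_toList]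
    exact List.getElem_mem hlt
  have hssurj : ∀ k ∈ V, ∃ j : Fin i, s j = k := by
    intro k hk
    rw [← Finset.mem_toList, ← hvldef] at hk
    obtain ⟨t, ht, rfl⟩ := List.mem_iff_getElem.mp hk
    have htr : t < r := hvlen ▸ ht
    refine ⟨⟨t, lt_of_lt_of_le htr hVcard⟩, ?_⟩
    rw [hsdef]
    simp only
    have : min t (r - 1) = t := by omega
    rw [this, List.getD_eq_getElem vlist 0 ht]
  refine ⟨fun j => (Fb (s j) : Set β), fun j => ?_, ?_⟩
  · show IsWeakConvex w ((Fb (s j) : Set β))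
    have : ((Fb (s j) : Set β)) = {q : β | g q = s j + 1} := by
      ext q; simp [hFbdef]
    rw [this]
    exact fiber_weakConvex hw hgPP _
  · show (⋃ j, (Fb (s j) : Set β)).ncard = _
    have hunion : (⋃ j, (Fb (s j) : Set β)) = (V.biUnion Fb : Finset β) := by
      ext q
      simp only [Set.mem_iUnion, Finset.coe_biUnion, Set.mem_iUnion, Finset.mem_coe]
      constructor
      · rintro ⟨j, hj⟩
        exact ⟨s j, hsV j, hj⟩
      · rintro ⟨k, hk, hq⟩
        obtain ⟨j, rfl⟩ := hssurj k hk
        exact ⟨j, hq⟩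
    rw [hunion, Set.ncard_coe_finset]
    rw [Finset.card_biUnion]
    · exact Finset.sum_congr rfl hFbcard
    · intro k hk k' hk' hne
      rw [Function.onFun, Finset.disjoint_left]
      intro q hq hq'
      simp only [hFbdef, Finset.mem_filter] at hq hq'
      omega

end MainQ


end AuxStmt10

/-- under `M`-support containment, for every `i ≥ 1` the maximum
cardinality of a union of `i` weak convex subposets of `(P,ω)` is at most that
of `(Q,τ)`. -/
theorem stmt_10 {α β : Type*} [PartialOrder α] [PartialOrder β] [Fintype α] [Fintype β]
    {n : ℕ} (ω : α ≃ Fin n) (τ : β ≃ Fin n) (h : suppM ω ⊆ suppM τ)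
    (i : ℕ) (hi : 1 ≤ i) :
    sSup {m | ∃ T : Fin i → Set α,
        (∀ j, IsWeakConvex (fun p => ((ω p : ℕ))) (T j)) ∧ (⋃ j, T j).ncard = m} ≤
      sSup {m | ∃ T : Fin i → Set β,
        (∀ j, IsWeakConvex (fun p => ((τ p : ℕ))) (T j)) ∧ (⋃ j, T j).ncard = m} := by
  classical
  set SQ : Set ℕ := {m | ∃ T : Fin i → Set β,
    (∀ j, IsWeakConvex (fun p => ((τ p : ℕ))) (T j)) ∧ (⋃ j, T j).ncard = m} with hSQ
  have hbdd : BddAbove SQ := by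
    refine ⟨Fintype.card β, ?_⟩
    rintro m ⟨T, _, rfl⟩
    have := Set.ncard_le_ncard (Set.subset_univ (⋃ j, T j)) Set.finite_univ
    rwa [Set.ncard_univ, Nat.card_eq_fintype_card] at this
  have hempty : IsWeakConvex (fun p : α => ((ω p : ℕ))) (∅ : Set α) :=
    ⟨fun x y z _ _ hx _ => absurd hx (Set.notMem_empty _),
     fun a ha => absurd ha (Set.notMem_empty _)⟩
  refine csSup_le ⟨0, fun _ => ∅, fun _ => hempty, by simp⟩ ?_
  rintro m ⟨T, hT, rfl⟩
  obtain ⟨c, hc, V, hVcard, hVlt, hle⟩ := main_P ω i T hT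
  have hcτ : c ∈ suppM τ := h hc
  rcases V.eq_empty_or_nonempty with rfl | hVne
  · simp only [Finset.sum_empty] at hle
    exact hle.trans (Nat.zero_le _)
  · obtain ⟨T', hT', hN⟩ := main_Q τ i c hcτ V hVcard hVlt hVne
    have hmem : (⋃ j, T' j).ncard ∈ SQ := ⟨T', hT', rfl⟩
    exact (hle.trans hN.ge).trans (le_csSup hbdd hmem)
end
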